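/- arXiv:1501.07564 — 5 statements merged into one kernel-verified Lean document; each statement's English description precedes it below -/
import Mathlib

section
/- Let A be an n×n complex matrix all of whose eigenvalues have strictly negative real part, and let D be any n×n complex matrix. Then the function t ↦ e^{tA} D e^{tA^H} is Bochner integrable on [0,∞), and the matrix X = ∫₀^∞ e^{tA} D e^{tA^H} dt satisfies A X + X A^H = −D. -/
open Matrix MeasureTheory NormedSpace

attribute [local instance] Matrix.frobeniusNormedAddCommGroup Matrix.frobeniusNormedSpace

section
attribute [local instance] Matrix.frobeniusNormedRing Matrix.frobeniusNormedAlgebra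

set_option maxHeartbeats 1000000

private lemma frob_le_sum {m : Type*} [Fintype m] (M : Matrix m m ℂ) :
    ‖M‖ ≤ ∑ i, ∑ j, ‖M i j‖ := by
  rw [Matrix.frobenius_norm_def]
  have hs : (0:ℝ) ≤ ∑ i, ∑ j, ‖M i j‖ :=
    Finset.sum_nonneg fun i _ => Finset.sum_nonneg fun j _ => norm_nonneg _
  have h1 : ∑ i, ∑ j, ‖M i j‖ ^ (2:ℝ) ≤ (∑ i, ∑ j, ‖M i j‖) ^ (2:ℝ) := by
    have : ∀ x : ℝ, 0 ≤ x → x ^ (2:ℝ) = x ^ (2:ℕ) := fun x hx => by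
      rw [← Real.rpow_natCast x 2]; norm_num
    rw [this _ hs]
    calc ∑ i, ∑ j, ‖M i j‖ ^ (2:ℝ)
        = ∑ i, ∑ j, ‖M i j‖ ^ (2:ℕ) := by
          refine Finset.sum_congr rfl fun i _ => Finset.sum_congr rfl fun j _ => ?_
          rw [this _ (norm_nonneg _)]
      _ ≤ (∑ i, ∑ j, ‖M i j‖) ^ (2:ℕ) := by
          rw [← Finset.sum_product']
          rw [← Finset.sum_product' (f := fun i j => ‖M i j‖)]
          exact Finset.sum_sq_le_sq_sum_of_nonneg fun p _ => norm_nonneg _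
  calc (∑ i, ∑ j, ‖M i j‖ ^ (2:ℝ)) ^ (1/2 : ℝ)
      ≤ ((∑ i, ∑ j, ‖M i j‖) ^ (2:ℝ)) ^ (1/2 : ℝ) := by
        apply Real.rpow_le_rpow (Finset.sum_nonneg fun i _ => Finset.sum_nonneg fun j _ => by positivity) h1 (by norm_num)
    _ = ∑ i, ∑ j, ‖M i j‖ := by
        rw [← Real.rpow_mul hs]; norm_num

private lemma pow_mul_exp_decay {ε : ℝ} (hε : 0 < ε) (j : ℕ) (t : ℝ) (ht : 0 ≤ t) :
    t ^ j * Real.exp (-(2 * ε) * t) ≤ (j.factorial : ℝ) * ε⁻¹ ^ j * Real.exp (-ε * t) := by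
  have h1 : (ε * t) ^ j / (j.factorial : ℝ) ≤ Real.exp (ε * t) := by
    calc (ε * t) ^ j / (j.factorial : ℝ)
        ≤ ∑ i ∈ Finset.range (j + 1), (ε * t) ^ i / (i.factorial : ℝ) :=
          Finset.single_le_sum (f := fun i => (ε * t) ^ i / (i.factorial : ℝ))
            (fun i _ => by positivity) (Finset.self_mem_range_succ j)
      _ ≤ Real.exp (ε * t) := Real.sum_le_exp_of_nonneg (by positivity) _
  have h2 : t ^ j ≤ (j.factorial : ℝ) * ε⁻¹ ^ j * Real.exp (ε * t) := by
    rw [mul_pow, div_le_iff₀ (by positivity)] at h1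
    have hεj : (0:ℝ) < ε ^ j := by positivity
    calc t ^ j = (ε ^ j * t ^ j) * ε⁻¹ ^ j := by
          rw [inv_pow]; field_simp
      _ ≤ (Real.exp (ε * t) * (j.factorial : ℝ)) * ε⁻¹ ^ j := by
          apply mul_le_mul_of_nonneg_right h1 (by positivity)
      _ = (j.factorial : ℝ) * ε⁻¹ ^ j * Real.exp (ε * t) := by ring
  calc t ^ j * Real.exp (-(2 * ε) * t)
      ≤ ((j.factorial : ℝ) * ε⁻¹ ^ j * Real.exp (ε * t)) * Real.exp (-(2 * ε) * t) :=
        mul_le_mul_of_nonneg_right h2 (Real.exp_pos _).le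
    _ = (j.factorial : ℝ) * ε⁻¹ ^ j * Real.exp (-ε * t) := by
        rw [mul_assoc, ← Real.exp_add]; ring_nf

private lemma exp_mulVec_genEig {n : ℕ} (A : Matrix (Fin n) (Fin n) ℂ) (μ : ℂ) (k : ℕ)
    (v : Fin n → ℂ) (hv : ((A - μ • 1) ^ k) *ᵥ v = 0) (t : ℝ) :
    exp (t • A) *ᵥ v
      = Complex.exp (t • μ) • ∑ j ∈ Finset.range k,
          ((j.factorial : ℂ)⁻¹ * (t : ℂ) ^ j) • (((A - μ • 1) ^ j) *ᵥ v) := by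
  set N : Matrix (Fin n) (Fin n) ℂ := A - μ • 1 with hN
  have hsplit : t • A = t • ((μ : ℂ) • (1 : Matrix (Fin n) (Fin n) ℂ)) + t • N := by
    rw [← smul_add, hN, add_sub_cancel]
  have hcomm : Commute (t • ((μ : ℂ) • (1 : Matrix (Fin n) (Fin n) ℂ))) (t • N) :=
    (((Commute.one_left N).smul_left μ).smul_left t).smul_right t
  have h1 : exp (t • ((μ : ℂ) • (1 : Matrix (Fin n) (Fin n) ℂ)))
      = Complex.exp (t • μ) • (1 : Matrix (Fin n) (Fin n) ℂ) := by
    have he : t • ((μ : ℂ) • (1 : Matrix (Fin n) (Fin n) ℂ))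
        = algebraMap ℂ (Matrix (Fin n) (Fin n) ℂ) (t • μ) := by
      rw [Algebra.algebraMap_eq_smul_one, ← smul_assoc]
    rw [he]
    refine (algebraMap_exp_comm (𝔸 := Matrix (Fin n) (Fin n) ℂ) (t • μ)).symm.trans ?_
    rw [Algebra.algebraMap_eq_smul_one, Complex.exp_eq_exp_ℂ]
  have h2 : exp (t • A) = Complex.exp (t • μ) • exp (t • N) := by
    rw [hsplit, Matrix.exp_add_of_commute _ _ hcomm, h1, smul_mul_assoc, one_mul]
  let L : Matrix (Fin n) (Fin n) ℂ →L[ℂ] (Fin n → ℂ) :=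
    LinearMap.toContinuousLinearMap
      { toFun := fun M => M *ᵥ v
        map_add' := fun M P => Matrix.add_mulVec M P v
        map_smul' := fun c M => Matrix.smul_mulVec c M v }
  have h3 : exp (t • N) *ᵥ v = ∑' j : ℕ, ((j.factorial : ℂ)⁻¹ • (t • N) ^ j) *ᵥ v := by
    rw [exp_eq_tsum (𝕂 := ℂ)]
    exact L.map_tsum (expSeries_summable' (𝕂 := ℂ) (t • N))
  have h4 : ∀ j : ℕ, ((j.factorial : ℂ)⁻¹ • (t • N) ^ j) *ᵥ v
      = ((j.factorial : ℂ)⁻¹ * (t : ℂ) ^ j) • (N ^ j *ᵥ v) := by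
    intro j
    rw [smul_pow, Matrix.smul_mulVec, Matrix.smul_mulVec, ← smul_smul]
    congr 1
    rw [← Complex.ofReal_pow, ← algebraMap_smul (R := ℝ) ℂ (t ^ j) (N ^ j *ᵥ v)]
    rfl
  have hvan : ∀ j ∉ Finset.range k, ((j.factorial : ℂ)⁻¹ • (t • N) ^ j) *ᵥ v = 0 := by
    intro j hj
    rw [Finset.mem_range, not_lt] at hj
    rw [h4 j]
    have : N ^ j *ᵥ v = 0 := by
      have : N ^ j = N ^ (j - k) * N ^ k := by rw [← pow_add]; congr 1; omega
      rw [this, ← Matrix.mulVec_mulVec, hv, Matrix.mulVec_zero]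
    rw [this, smul_zero]
  rw [h2, Matrix.smul_mulVec, h3, tsum_eq_sum hvan]
  congr 1
  exact Finset.sum_congr rfl fun j _ => h4 j

private lemma vec_decay {n : ℕ} (A : Matrix (Fin n) (Fin n) ℂ) {ε : ℝ} (hε : 0 < ε)
    (hA : ∀ μ ∈ spectrum ℂ A, μ.re ≤ -(2 * ε)) (v : Fin n → ℂ) :
    ∃ C : ℝ, 0 ≤ C ∧ ∀ t : ℝ, 0 ≤ t → ‖exp (t • A) *ᵥ v‖ ≤ C * Real.exp (-ε * t) := by
  let S : Submodule ℂ (Fin n → ℂ) :=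
    { carrier := {w | ∃ C : ℝ, 0 ≤ C ∧ ∀ t : ℝ, 0 ≤ t →
        ‖exp (t • A) *ᵥ w‖ ≤ C * Real.exp (-ε * t)}
      zero_mem' := ⟨0, le_refl 0, fun t _ => by simp [Matrix.mulVec_zero]⟩
      add_mem' := by
        rintro a b ⟨Ca, hCa, ha⟩ ⟨Cb, hCb, hb⟩
        refine ⟨Ca + Cb, by linarith, fun t ht => ?_⟩
        rw [Matrix.mulVec_add]
        calc ‖exp (t • A) *ᵥ a + exp (t • A) *ᵥ b‖
            ≤ ‖exp (t • A) *ᵥ a‖ + ‖exp (t • A) *ᵥ b‖ := norm_add_le _ _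
          _ ≤ Ca * Real.exp (-ε * t) + Cb * Real.exp (-ε * t) := add_le_add (ha t ht) (hb t ht)
          _ = (Ca + Cb) * Real.exp (-ε * t) := by ring
      smul_mem' := by
        rintro c a ⟨Ca, hCa, ha⟩
        refine ⟨‖c‖ * Ca, by positivity, fun t ht => ?_⟩
        rw [Matrix.mulVec_smul, norm_smul, mul_assoc]
        exact mul_le_mul_of_nonneg_left (ha t ht) (norm_nonneg c) }
  suffices hS : v ∈ S by exact hS
  have htop : (⊤ : Submodule ℂ (Fin n → ℂ)) ≤ S := by
    rw [← Module.End.iSup_maxGenEigenspace_eq_top (Matrix.toLinAlgEquiv' A)]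
    refine iSup_le fun μ => ?_
    intro w hw
    rcases eq_or_ne w 0 with rfl | hw0
    · exact S.zero_mem
    obtain ⟨k, hk⟩ := (Module.End.mem_maxGenEigenspace _ _ _).mp hw
    -- μ is in the spectrum of A
    have hμmem : μ ∈ spectrum ℂ A := by
      rw [← AlgEquiv.spectrum_eq Matrix.toLinAlgEquiv' A]
      rw [← Module.End.hasEigenvalue_iff_mem_spectrum]
      refine Module.End.hasEigenvalue_of_hasGenEigenvalue (k := k) ?_
      have hmem : w ∈ Module.End.genEigenspace (Matrix.toLinAlgEquiv' A) μ k :=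
        Module.End.mem_genEigenspace_nat.mpr (LinearMap.mem_ker.mpr hk)
      rw [Module.End.hasGenEigenvalue_iff]
      intro hbot
      rw [hbot] at hmem
      exact hw0 (by simpa using hmem)
    have hre : μ.re ≤ -(2 * ε) := hA μ hμmem
    -- translate hk to matrix form
    have hkm : ((A - μ • 1) ^ k) *ᵥ w = 0 := by
      have : (Matrix.toLinAlgEquiv' ((A - μ • 1) ^ k)) w = 0 := by
        rw [map_pow, map_sub, _root_.map_smul, _root_.map_one]
        exact hk
      exact this
    refine ⟨∑ j ∈ Finset.range k,
      ‖((A - μ • 1) ^ j) *ᵥ w‖ * ((j.factorial : ℝ) * ε⁻¹ ^ j) / (j.factorial : ℝ),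
      by positivity, fun t ht => ?_⟩
    rw [exp_mulVec_genEig A μ k w hkm t, norm_smul]
    have habs : ‖Complex.exp (t • μ)‖ = Real.exp (t * μ.re) := by
      rw [Complex.norm_exp]
      congr 1
      simp [Complex.smul_re]
    rw [habs]
    calc Real.exp (t * μ.re) * ‖∑ j ∈ Finset.range k,
          ((j.factorial : ℂ)⁻¹ * (t : ℂ) ^ j) • (((A - μ • 1) ^ j) *ᵥ w)‖
        ≤ Real.exp (t * μ.re) * ∑ j ∈ Finset.range k,
            ‖((j.factorial : ℂ)⁻¹ * (t : ℂ) ^ j) • (((A - μ • 1) ^ j) *ᵥ w)‖ :=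
          mul_le_mul_of_nonneg_left (norm_sum_le _ _) (Real.exp_pos _).le
      _ = ∑ j ∈ Finset.range k, ‖((A - μ • 1) ^ j) *ᵥ w‖ / (j.factorial : ℝ)
            * (t ^ j * Real.exp (t * μ.re)) := by
          rw [Finset.mul_sum]
          refine Finset.sum_congr rfl fun j _ => ?_
          rw [norm_smul, norm_mul, norm_inv, norm_pow]
          have h1 : ‖(j.factorial : ℂ)‖ = (j.factorial : ℝ) := by
            rw [Complex.norm_natCast]
          have h2 : ‖(t : ℂ)‖ = |t| := by simp
          rw [h1, h2, abs_of_nonneg ht]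
          ring
      _ ≤ ∑ j ∈ Finset.range k, ‖((A - μ • 1) ^ j) *ᵥ w‖ / (j.factorial : ℝ)
            * ((j.factorial : ℝ) * ε⁻¹ ^ j * Real.exp (-ε * t)) := by
          refine Finset.sum_le_sum fun j _ => ?_
          refine mul_le_mul_of_nonneg_left ?_ (by positivity)
          calc t ^ j * Real.exp (t * μ.re)
              ≤ t ^ j * Real.exp (-(2 * ε) * t) := by
                refine mul_le_mul_of_nonneg_left ?_ (by positivity)
                apply Real.exp_le_exp.mpr
                calc t * μ.re ≤ t * (-(2*ε)) := mul_le_mul_of_nonneg_left hre ht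
                  _ = -(2*ε) * t := by ring
            _ ≤ (j.factorial : ℝ) * ε⁻¹ ^ j * Real.exp (-ε * t) :=
                pow_mul_exp_decay hε j t ht
      _ = (∑ j ∈ Finset.range k,
            ‖((A - μ • 1) ^ j) *ᵥ w‖ * ((j.factorial : ℝ) * ε⁻¹ ^ j) / (j.factorial : ℝ))
            * Real.exp (-ε * t) := by
          rw [Finset.sum_mul]
          refine Finset.sum_congr rfl fun j _ => ?_
          ring
  exact htop (Submodule.mem_top)

private lemma mat_decay {n : ℕ} (A : Matrix (Fin n) (Fin n) ℂ)
    (hA : ∀ μ ∈ spectrum ℂ A, μ.re < 0) :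
    ∃ C ε : ℝ, 0 < ε ∧ 0 ≤ C ∧ ∀ t : ℝ, 0 ≤ t → ‖exp (t • A)‖ ≤ C * Real.exp (-ε * t) := by
  obtain ⟨ε, hε, hspec⟩ : ∃ ε : ℝ, 0 < ε ∧ ∀ μ ∈ spectrum ℂ A, μ.re ≤ -(2 * ε) := by
    rcases Set.eq_empty_or_nonempty (spectrum ℂ A) with h | h
    · exact ⟨1, one_pos, by simp [h]⟩
    · obtain ⟨μ₀, hμ₀, hmax⟩ := Set.exists_max_image _ Complex.re (Matrix.finite_spectrum A) h
      exact ⟨-μ₀.re / 2, by linarith [hA μ₀ hμ₀], fun μ hμ => by linarith [hmax μ hμ]⟩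
  choose Cf hCf0 hCf using fun j : Fin n => vec_decay A hε hspec (Pi.single j 1)
  refine ⟨(Fintype.card (Fin n) : ℝ) * ∑ j, Cf j, ε, hε,
    mul_nonneg (by positivity) (Finset.sum_nonneg fun j _ => hCf0 j), fun t ht => ?_⟩
  calc ‖exp (t • A)‖
      ≤ ∑ i, ∑ j, ‖exp (t • A) i j‖ := frob_le_sum _
    _ ≤ ∑ i : Fin n, ∑ j, Cf j * Real.exp (-ε * t) := by
        refine Finset.sum_le_sum fun i _ => Finset.sum_le_sum fun j _ => ?_
        have h1 : exp (t • A) *ᵥ Pi.single j 1 = fun i => exp (t • A) i j := by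
          rw [Matrix.mulVec_single]
          simp
          rfl
        have h2 : ‖exp (t • A) i j‖ ≤ ‖exp (t • A) *ᵥ Pi.single j 1‖ := by
          rw [h1]
          exact norm_le_pi_norm (fun i => exp (t • A) i j) i
        exact h2.trans (hCf j t ht)
    _ = ((Fintype.card (Fin n) : ℝ) * ∑ j, Cf j) * Real.exp (-ε * t) := by
        rw [Finset.sum_const, ← Finset.sum_mul]
        simp [Finset.card_univ, mul_assoc]

end

/-- **Heinz integral-of-exponentials closed form.**
If all eigenvalues of `A` have strictly negative real part, then
`t ↦ e^{tA} D e^{tAᴴ}` is Bochner integrable on `[0, ∞)` and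
`X = ∫₀^∞ e^{tA} D e^{tAᴴ} dt` satisfies `A X + X Aᴴ = -D`. -/
theorem lyapunov_exp_integral_closed_form
    (n : ℕ) (A D : Matrix (Fin n) (Fin n) ℂ)
    (hA : ∀ μ ∈ spectrum ℂ A, μ.re < 0) :
    @IntegrableOn ℝ (Matrix (Fin n) (Fin n) ℂ) _
      (Matrix.frobeniusNormedAddCommGroup (n := Fin n) (m := Fin n) (α := ℂ)).toUniformSpace.toTopologicalSpace _
      (fun t : ℝ => exp (t • A) * D * exp (t • Aᴴ)) (Set.Ici (0 : ℝ)) volume ∧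
    A * (∫ t in Set.Ici (0 : ℝ), exp (t • A) * D * exp (t • Aᴴ)) +
      (∫ t in Set.Ici (0 : ℝ), exp (t • A) * D * exp (t • Aᴴ)) * Aᴴ = -D := by
  letI := Matrix.frobeniusNormedRing (α := ℂ) (m := Fin n)
  letI := Matrix.frobeniusNormedAlgebra (α := ℂ) (m := Fin n) (R := ℂ)
  obtain ⟨C, ε, hε, hC, hbound⟩ := mat_decay A hA
  set f : ℝ → Matrix (Fin n) (Fin n) ℂ := fun t => exp (t • A) * D * exp (t • Aᴴ) with hfdef
  have hexpH : ∀ t : ℝ, exp (t • Aᴴ) = (exp (t • A))ᴴ := fun t => by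
    rw [← Matrix.exp_conjTranspose, Matrix.conjTranspose_smul]
    norm_num
  -- norm bound
  have hnorm : ∀ t : ℝ, 0 ≤ t → ‖f t‖ ≤ C * C * ‖D‖ * Real.exp (-(2 * ε) * t) := by
    intro t ht
    have h1 : ‖f t‖ ≤ ‖exp (t • A)‖ * ‖D‖ * ‖exp (t • Aᴴ)‖ :=
      (norm_mul_le _ _).trans (mul_le_mul_of_nonneg_right (norm_mul_le _ _) (norm_nonneg _))
    have h2 : ‖exp (t • Aᴴ)‖ = ‖exp (t • A)‖ := by
      rw [hexpH t, Matrix.frobenius_norm_conjTranspose]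
    calc ‖f t‖ ≤ ‖exp (t • A)‖ * ‖D‖ * ‖exp (t • A)‖ := by rw [h2] at h1; exact h1
      _ ≤ (C * Real.exp (-ε * t)) * ‖D‖ * (C * Real.exp (-ε * t)) := by
          have hb := hbound t ht
          exact mul_le_mul (mul_le_mul_of_nonneg_right hb (norm_nonneg _)) hb
            (norm_nonneg _) (by positivity)
      _ = C * C * ‖D‖ * (Real.exp (-ε * t) * Real.exp (-ε * t)) := by ring
      _ = C * C * ‖D‖ * Real.exp (-(2 * ε) * t) := by
          rw [← Real.exp_add]
          ring_nf
  -- derivative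
  have hderiv : ∀ t : ℝ, HasDerivAt f (A * f t + f t * Aᴴ) t := by
    intro t
    have h1 : HasDerivAt (fun u : ℝ => exp (u • A)) (A * exp (t • A)) t := by
      have := hasDerivAt_exp_smul_const' (𝕂 := ℝ) A t
      exact this
    have h2 : HasDerivAt (fun u : ℝ => exp (u • Aᴴ)) (exp (t • Aᴴ) * Aᴴ) t := by
      have := hasDerivAt_exp_smul_const (𝕂 := ℝ) Aᴴ t
      exact this
    have h3 : HasDerivAt (fun u : ℝ => exp (u • A) * D * exp (u • Aᴴ))
        (A * exp (t • A) * D * exp (t • Aᴴ) + exp (t • A) * D * (exp (t • Aᴴ) * Aᴴ)) t :=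
      (h1.mul_const D).mul h2
    convert h3 using 1
    simp only [hfdef]
    noncomm_ring
  have hcont : Continuous f := by
    rw [continuous_iff_continuousAt]
    exact fun t => (hderiv t).continuousAt
  -- integrability of f on Ici 0
  have hgint : IntegrableOn (fun t : ℝ => C * C * ‖D‖ * Real.exp (-(2 * ε) * t))
      (Set.Ici (0 : ℝ)) := by
    rw [integrableOn_Ici_iff_integrableOn_Ioi]
    exact (exp_neg_integrableOn_Ioi 0 (by positivity : (0:ℝ) < 2 * ε)).const_mul _
  letI : TopologicalSpace (Matrix (Fin n) (Fin n) ℂ) :=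
    (Matrix.frobeniusNormedAddCommGroup (n := Fin n) (m := Fin n) (α := ℂ)).toUniformSpace.toTopologicalSpace
  have hfint : IntegrableOn f (Set.Ici (0 : ℝ)) := by
    refine Integrable.mono' hgint ((show Continuous f from hcont).aestronglyMeasurable.restrict) ?_
    refine (ae_restrict_mem measurableSet_Ici).mono fun t ht => hnorm t ht
  have hfintIoi : IntegrableOn f (Set.Ioi (0 : ℝ)) :=
    hfint.mono_set Set.Ioi_subset_Ici_self
  -- tendsto 0
  have htend : Filter.Tendsto f Filter.atTop (nhds 0) := by
    apply squeeze_zero_norm' (a := fun t => C * C * ‖D‖ * Real.exp (-(2 * ε) * t))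
    · filter_upwards [Filter.eventually_ge_atTop (0:ℝ)] with t ht using hnorm t ht
    · have h1 : Filter.Tendsto (fun t : ℝ => -(2 * ε) * t) Filter.atTop Filter.atBot :=
        Filter.Tendsto.const_mul_atTop_of_neg (by linarith : -(2*ε) < 0) Filter.tendsto_id
      have h2 := Real.tendsto_exp_atBot.comp h1
      simpa using (h2.const_mul (C * C * ‖D‖))
  -- left/right multiplication CLMs
  let L1 : Matrix (Fin n) (Fin n) ℂ →L[ℂ] Matrix (Fin n) (Fin n) ℂ :=
    ContinuousLinearMap.mul ℂ (Matrix (Fin n) (Fin n) ℂ) A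
  let L2 : Matrix (Fin n) (Fin n) ℂ →L[ℂ] Matrix (Fin n) (Fin n) ℂ :=
    (ContinuousLinearMap.mul ℂ (Matrix (Fin n) (Fin n) ℂ)).flip Aᴴ
  have hL1 : ∀ M, L1 M = A * M := fun M => rfl
  have hL2 : ∀ M, L2 M = M * Aᴴ := fun M => rfl
  have h1int : Integrable (fun t => A * f t) (volume.restrict (Set.Ioi (0:ℝ))) :=
    L1.integrable_comp hfintIoi
  have h2int : Integrable (fun t => f t * Aᴴ) (volume.restrict (Set.Ioi (0:ℝ))) :=
    L2.integrable_comp hfintIoi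
  have hf'int : IntegrableOn (fun t => A * f t + f t * Aᴴ) (Set.Ioi (0:ℝ)) :=
    h1int.add h2int
  have key : ∫ t in Set.Ioi (0:ℝ), (A * f t + f t * Aᴴ) = 0 - f 0 :=
    integral_Ioi_of_hasDerivAt_of_tendsto' (fun t _ => hderiv t) hf'int htend
  have hf0 : f 0 = D := by
    simp [hfdef, exp_zero]
  rw [hf0, zero_sub] at key
  rw [integral_add h1int h2int] at key
  have e1 : ∫ t in Set.Ioi (0:ℝ), A * f t = A * ∫ t in Set.Ioi (0:ℝ), f t :=
    (L1.integral_comp_comm hfintIoi)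
  have e2 : ∫ t in Set.Ioi (0:ℝ), f t * Aᴴ = (∫ t in Set.Ioi (0:ℝ), f t) * Aᴴ :=
    (L2.integral_comp_comm hfintIoi)
  rw [e1, e2] at key
  refine ⟨hfint, ?_⟩
  rw [show (∫ t in Set.Ici (0:ℝ), f t) = ∫ t in Set.Ioi (0:ℝ), f t from
    integral_Ici_eq_integral_Ioi]
  exact key
end

section
/- Let A be an n×n real symmetric positive definite matrix with bandwidth β ≥ 1, i.e., A_{ij} = 0 whenever |i − j| > β. Let λ_min and λ_max denote its smallest and largest eigenvalues, let κ = λ_max/λ_min, q = (√κ − 1)/(√κ + 1), and c₀ = max{ 1/λ_min , (1 + √κ)²/(2 λ_max) }. Then for all indices i, j, the entries of the inverse satisfy |(A^{-1})_{ij}| ≤ c₀ · q^{|i−j|/β}. -/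
open Matrix

open Polynomial Real in
private lemma exists_cos_poly (u v : ℝ) (hv : v ≠ 0) :
    ∀ k : ℕ, ∃ p : Polynomial ℝ, p.natDegree ≤ k ∧
      ∀ θ : ℝ, p.eval (u + v * Real.cos θ) = Real.cos (k * θ) := by
  intro k
  induction k using Nat.twoStepInduction with
  | zero => exact ⟨1, by simp, fun θ => by simp⟩
  | one =>
    refine ⟨Polynomial.C v⁻¹ * (Polynomial.X - Polynomial.C u), ?_, fun θ => ?_⟩
    · apply le_trans (Polynomial.natDegree_mul_le)
      simp [Polynomial.natDegree_X_sub_C]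
    · simp only [Polynomial.eval_mul, Polynomial.eval_C, Polynomial.eval_sub, Polynomial.eval_X]
      field_simp
      push_cast; ring
  | more k ih0 ih1 =>
    obtain ⟨p0, hd0, he0⟩ := ih0
    obtain ⟨p1, hd1, he1⟩ := ih1
    refine ⟨Polynomial.C (2/v) * (Polynomial.X - Polynomial.C u) * p1 - p0, ?_, fun θ => ?_⟩
    · apply le_trans (Polynomial.natDegree_sub_le _ _)
      have h1 : (Polynomial.C (2/v) * (Polynomial.X - Polynomial.C u) * p1).natDegree ≤ k + 2 := by
        apply le_trans (Polynomial.natDegree_mul_le)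
        have := Polynomial.natDegree_mul_le (p := Polynomial.C (2/v)) (q := Polynomial.X - Polynomial.C u)
        simp [Polynomial.natDegree_X_sub_C] at this ⊢
        omega
      simp only [max_le_iff]
      exact ⟨h1, le_trans hd0 (by omega)⟩
    · simp only [Polynomial.eval_sub, Polynomial.eval_mul, Polynomial.eval_C, Polynomial.eval_X,
        he0, he1]
      have h2 : ((k:ℝ)+2) * θ = ((k:ℝ)+1)*θ + θ := by ring
      have h0 : (k:ℝ) * θ = ((k:ℝ)+1)*θ - θ := by ring
      push_cast
      rw [h2, h0, Real.cos_add, Real.cos_sub]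
      field_simp
      ring

open Polynomial Real in
private lemma trig_bound (q θ φ : ℝ) (hq0 : 0 ≤ q) (hq1 : q < 1) :
    |Real.cos (φ+θ) + 2*q*Real.cos φ + q^2*Real.cos (φ-θ)| ≤ 1 + 2*q*Real.cos θ + q^2 := by
  have hD : 0 < 1 + 2*q*Real.cos θ + q^2 := by
    nlinarith [Real.neg_one_le_cos θ, sq_nonneg (1-q)]
  have pythθ := Real.sin_sq_add_cos_sq θ
  have pythφ := Real.sin_sq_add_cos_sq φ
  rw [Real.cos_add, Real.cos_sub]
  set C := Real.cos φ; set S := Real.sin φ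
  set cθ := Real.cos θ; set sθ := Real.sin θ
  have hid : (C*cθ - S*sθ + 2*q*C + q^2*(C*cθ + S*sθ))^2
      + ((((1+q^2)*cθ+2*q))*S + (1-q^2)*sθ*C)^2 = (1 + 2*q*cθ + q^2)^2 := by
    linear_combination (((1+q^2)*cθ+2*q)^2 + ((1-q^2)*sθ)^2) * pythφ
      + ((1-q^2)^2) * pythθ
  rw [abs_le]
  constructor <;> nlinarith [sq_nonneg ((((1+q^2)*cθ+2*q))*S + (1-q^2)*sθ*C),
    sq_nonneg (C*cθ - S*sθ + 2*q*C + q^2*(C*cθ + S*sθ) - (1 + 2*q*cθ + q^2)),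
    sq_nonneg (C*cθ - S*sθ + 2*q*C + q^2*(C*cθ + S*sθ) + (1 + 2*q*cθ + q^2))]

open Polynomial Real in
set_option maxHeartbeats 1000000 in
private lemma approx_inv_aux (α γ : ℝ) (hα : 0 < α) (hαγ : α < γ) (k : ℕ) :
    ∃ p : Polynomial ℝ, p.natDegree ≤ k ∧ ∀ x ∈ Set.Icc (α^2) (γ^2),
      |1/x - p.eval x| ≤ 2/(α*γ*(1-((γ-α)/(γ+α))^2)) * ((γ-α)/(γ+α))^(k+1) := by
  have hγ : 0 < γ := hα.trans hαγ
  have hsumpos : 0 < γ + α := by linarith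
  obtain ⟨q, hq_def⟩ : ∃ q : ℝ, q = (γ-α)/(γ+α) := ⟨_, rfl⟩
  rw [← hq_def]
  obtain ⟨c, hc_def⟩ : ∃ c : ℝ, c = (α^2+γ^2)/2 := ⟨_, rfl⟩
  obtain ⟨dd, hdd_def⟩ : ∃ dd : ℝ, dd = (γ^2-α^2)/2 := ⟨_, rfl⟩
  have hq0 : 0 < q := by rw [hq_def]; apply div_pos (by linarith) hsumpos
  have hq1 : q < 1 := by rw [hq_def, div_lt_one hsumpos]; linarith
  have h1q2 : 0 < 1 - q^2 := by nlinarith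
  have hαγpos : 0 < α * γ := by positivity
  have hdd : 0 < dd := by rw [hdd_def]; nlinarith
  have hxpos : ∀ θ : ℝ, 0 < c + dd * Real.cos θ := by
    intro θ
    have h1 := Real.neg_one_le_cos θ
    have h2 := Real.cos_le_one θ
    have : dd * (-1) ≤ dd * Real.cos θ := mul_le_mul_of_nonneg_left h1 hdd.le
    rw [hc_def, hdd_def] at *
    nlinarith [sq_nonneg α]
  have hD : ∀ θ : ℝ, 0 < 1 + 2*q*Real.cos θ + q^2 := by
    intro θ
    nlinarith [Real.neg_one_le_cos θ, sq_nonneg (1-q)]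
  have hxD : ∀ θ : ℝ, (c + dd * Real.cos θ) * (1 - q^2) =
      α*γ*(1 + 2*q*Real.cos θ + q^2) := by
    intro θ
    rw [hc_def, hdd_def, hq_def]
    field_simp
    ring
  have hinv : ∀ θ : ℝ, 1/(c + dd*Real.cos θ) =
      (1-q^2)/(α*γ*(1 + 2*q*Real.cos θ + q^2)) := by
    intro θ
    rw [div_eq_div_iff (hxpos θ).ne' (mul_pos hαγpos (hD θ)).ne']
    linear_combination -hxD θ
  have claim : ∀ k : ℕ, ∃ p : Polynomial ℝ, p.natDegree ≤ k ∧ ∀ θ : ℝ,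
      p.eval (c + dd * Real.cos θ) = 1/(c + dd*Real.cos θ)
        - 2*(-q)^(k+1)/(α*γ*(1-q^2)) *
          ((Real.cos (((k:ℝ)+1)*θ) + 2*q*Real.cos ((k:ℝ)*θ) + q^2*Real.cos (((k:ℝ)-1)*θ))
            / (1 + 2*q*Real.cos θ + q^2)) := by
    intro k
    induction k with
    | zero =>
      refine ⟨Polynomial.C ((1+q^2)/(α*γ*(1-q^2))), by simp, fun θ => ?_⟩
      rw [Polynomial.eval_C, hinv θ]
      have hDθ := hD θ
      have hne1 : (α*γ*(1 + 2*q*Real.cos θ + q^2)) ≠ 0 := (mul_pos hαγpos hDθ).ne'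
      have hne2 : (α*γ*(1-q^2)) ≠ 0 := (mul_pos hαγpos h1q2).ne'
      push_cast
      rw [zero_add, one_mul, zero_mul, Real.cos_zero]
      have h3 : ((0:ℝ) - 1)*θ = -θ := by ring
      rw [h3, Real.cos_neg]
      have hne3 : (1 + 2*q*Real.cos θ + q^2) ≠ 0 := hDθ.ne'
      set D := 1 + 2*q*Real.cos θ + q^2 with hDdef
      field_simp
      rw [hDdef]
      ring
    | succ k ih =>
      obtain ⟨p, hdp, hep⟩ := ih
      obtain ⟨P1, hdP1, heP1⟩ := exists_cos_poly c dd (ne_of_gt hdd) (k+1)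
      obtain ⟨P0, hdP0, heP0⟩ := exists_cos_poly c dd (ne_of_gt hdd) k
      refine ⟨p + Polynomial.C (2*(-q)^(k+1)/(α*γ*(1-q^2))) * (P1 + Polynomial.C q * P0),
        ?_, fun θ => ?_⟩
      · apply le_trans (Polynomial.natDegree_add_le _ _)
        have h4 : (P1 + Polynomial.C q * P0).natDegree ≤ k+1 := by
          apply le_trans (Polynomial.natDegree_add_le _ _)
          refine max_le hdP1 (le_trans (Polynomial.natDegree_mul_le) ?_)
          rw [Polynomial.natDegree_C]
          omega
        have h5 : (Polynomial.C (2*(-q)^(k+1)/(α*γ*(1-q^2))) *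
            (P1 + Polynomial.C q * P0)).natDegree ≤ k+1 := by
          apply le_trans (Polynomial.natDegree_mul_le)
          rw [Polynomial.natDegree_C]
          omega
        exact max_le (hdp.trans (by omega)) h5
      · rw [Polynomial.eval_add, Polynomial.eval_mul, Polynomial.eval_C, Polynomial.eval_add,
          Polynomial.eval_mul, Polynomial.eval_C, hep, heP1, heP0]
        have hDθ := hD θ
        push_cast
        have e1 : ((k:ℝ)+1+1)*θ = (k*θ+θ)+θ := by ring
        have e2 : ((k:ℝ)+1)*θ = k*θ+θ := by ring
        have e3 : ((k:ℝ)+1-1)*θ = k*θ := by ring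
        have e4 : ((k:ℝ)-1)*θ = k*θ-θ := by ring
        have hne0 : (c + dd * Real.cos θ) ≠ 0 := (hxpos θ).ne'
        have hne1 : (α*γ*(1 + 2*q*Real.cos θ + q^2)) ≠ 0 := (mul_pos hαγpos hDθ).ne'
        have hne2 : (α*γ*(1-q^2)) ≠ 0 := (mul_pos hαγpos h1q2).ne'
        have hpow : (-q)^(k+1+1) = (-q)^(k+1)*(-q) := pow_succ _ _
        have hrec : Real.cos (((k:ℝ)*θ+θ)+θ) = 2*Real.cos θ * Real.cos ((k:ℝ)*θ+θ)
            - Real.cos ((k:ℝ)*θ) := by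
          have h1 := Real.cos_add ((k:ℝ)*θ+θ) θ
          have h2 := Real.cos_sub ((k:ℝ)*θ+θ) θ
          have h3 : (k:ℝ)*θ+θ-θ = (k:ℝ)*θ := by ring
          rw [h3] at h2
          linear_combination h1 + h2
        rw [e1, e2, e3, e4, hpow, hrec]
        simp only [Real.cos_add, Real.cos_sub]
        generalize (-q)^(k+1) = E
        have hne3 : (1 + 2*q*Real.cos θ + q^2) ≠ 0 := hDθ.ne'
        set D := 1 + 2*q*Real.cos θ + q^2 with hDdef
        field_simp
        rw [hDdef]
        ring
  obtain ⟨p, hdp, hep⟩ := claim k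
  refine ⟨p, hdp, fun x hx => ?_⟩
  obtain ⟨hax, hxb⟩ := hx
  have hcos_mem1 : -1 ≤ (x - c)/dd := by
    rw [le_div_iff₀ hdd, hc_def, hdd_def]; nlinarith
  have hcos_mem2 : (x-c)/dd ≤ 1 := by
    rw [div_le_one hdd, hc_def, hdd_def]; nlinarith
  set θ := Real.arccos ((x-c)/dd) with hθ_def
  have hcosθ : Real.cos θ = (x-c)/dd := Real.cos_arccos hcos_mem1 hcos_mem2
  have hxθ : c + dd * Real.cos θ = x := by
    rw [hcosθ]; field_simp; ring
  have hval := hep θ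
  rw [hxθ] at hval
  have herr : |1/x - p.eval x| = |2*(-q)^(k+1)/(α*γ*(1-q^2))| *
      |(Real.cos (((k:ℝ)+1)*θ) + 2*q*Real.cos ((k:ℝ)*θ) + q^2*Real.cos (((k:ℝ)-1)*θ))
        / (1 + 2*q*Real.cos θ + q^2)| := by
    rw [← abs_mul]
    congr 1
    rw [hval]; ring
  rw [herr]
  have h5 : |2*(-q)^(k+1)/(α*γ*(1-q^2))| = 2*q^(k+1)/(α*γ*(1-q^2)) := by
    rw [abs_div, abs_of_pos (mul_pos hαγpos h1q2), abs_mul, abs_pow, abs_neg,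
      abs_of_pos hq0]
    norm_num
  rw [h5]
  have h6 : |(Real.cos (((k:ℝ)+1)*θ) + 2*q*Real.cos ((k:ℝ)*θ) + q^2*Real.cos (((k:ℝ)-1)*θ))
      / (1 + 2*q*Real.cos θ + q^2)| ≤ 1 := by
    rw [abs_div, abs_of_pos (hD θ), div_le_one (hD θ)]
    have e1 : ((k:ℝ)+1)*θ = k*θ+θ := by ring
    have e4 : ((k:ℝ)-1)*θ = k*θ-θ := by ring
    rw [e1, e4]
    exact trig_bound q θ ((k:ℝ)*θ) hq0.le hq1
  calc 2*q^(k+1)/(α*γ*(1-q^2)) *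
      |(Real.cos (((k:ℝ)+1)*θ) + 2*q*Real.cos ((k:ℝ)*θ) + q^2*Real.cos (((k:ℝ)-1)*θ))
        / (1 + 2*q*Real.cos θ + q^2)|
      ≤ 2*q^(k+1)/(α*γ*(1-q^2)) * 1 := by
        apply mul_le_mul_of_nonneg_left h6
          (le_of_lt (div_pos (mul_pos two_pos (pow_pos hq0 _)) (mul_pos hαγpos h1q2)))
    _ = 2/(α*γ*(1-q^2)) * q^(k+1) := by ring

open Polynomial Real in
private lemma approx_inv (a b : ℝ) (ha : 0 < a) (hab : a < b) (k : ℕ) :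
    ∃ p : Polynomial ℝ, p.natDegree ≤ k ∧ ∀ x ∈ Set.Icc a b,
      |1/x - p.eval x| ≤ (1 + Real.sqrt (b/a))^2/(2*b) *
        ((Real.sqrt (b/a) - 1)/(Real.sqrt (b/a) + 1))^(k+1) := by
  have hb : 0 < b := ha.trans hab
  have hα : 0 < Real.sqrt a := Real.sqrt_pos.2 ha
  have hαγ : Real.sqrt a < Real.sqrt b := Real.sqrt_lt_sqrt ha.le hab
  obtain ⟨p, hdp, hbd⟩ := approx_inv_aux (Real.sqrt a) (Real.sqrt b) hα hαγ k
  rw [Real.sq_sqrt ha.le, Real.sq_sqrt hb.le] at hbd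
  refine ⟨p, hdp, fun x hx => ?_⟩
  set α := Real.sqrt a
  set γ := Real.sqrt b
  have hγ : 0 < γ := hα.trans hαγ
  have hsum : 0 < γ + α := by linarith
  have hs : Real.sqrt (b/a) = γ/α := Real.sqrt_div hb.le a
  have h1q2 : 0 < 1 - ((γ-α)/(γ+α))^2 := by
    have h1 : (γ-α)/(γ+α) < 1 := by rw [div_lt_one hsum]; linarith
    have h0 : 0 ≤ (γ-α)/(γ+α) := div_nonneg (by linarith) hsum.le
    nlinarith
  have hq_eq : (Real.sqrt (b/a) - 1)/(Real.sqrt (b/a) + 1) = (γ-α)/(γ+α) := by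
    rw [hs]
    have h7 : (0:ℝ) < γ/α + 1 := by positivity
    rw [div_eq_div_iff h7.ne' hsum.ne']
    field_simp
  have hC_eq : (1 + Real.sqrt (b/a))^2/(2*b) = 2/(α*γ*(1-((γ-α)/(γ+α))^2)) := by
    rw [hs, show b = γ^2 from (Real.sq_sqrt hb.le).symm]
    rw [div_eq_div_iff (by positivity) (by positivity)]
    field_simp
    ring
  rw [hq_eq, hC_eq]
  exact hbd x hx

/-- **Demko–Moss–Smith decay bound.**
For a real symmetric positive definite `β`-banded matrix `A` with extreme eigenvalues
`λ_min ≤ λ_max`, condition number `κ = λ_max/λ_min`, `q = (√κ - 1)/(√κ + 1)` and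
`c₀ = max (1/λ_min) ((1 + √κ)²/(2 λ_max))`, the entries of the inverse satisfy
`|(A⁻¹)ᵢⱼ| ≤ c₀ q^{|i-j|/β}`. -/
theorem inv_banded_spd_decay
    (n : ℕ) (A : Matrix (Fin n) (Fin n) ℝ)
    (β : ℕ) (hβ : 1 ≤ β)
    (hsymm : A.IsSymm) (hpd : A.PosDef)
    (hband : ∀ i j : Fin n, (β : ℤ) < |(i : ℤ) - (j : ℤ)| → A i j = 0)
    (lammin lammax : ℝ)
    (hmin_mem : lammin ∈ spectrum ℝ A) (hmax_mem : lammax ∈ spectrum ℝ A)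
    (hmin : ∀ μ ∈ spectrum ℝ A, lammin ≤ μ) (hmax : ∀ μ ∈ spectrum ℝ A, μ ≤ lammax)
    (κ q c₀ : ℝ)
    (hκ : κ = lammax / lammin)
    (hq : q = (Real.sqrt κ - 1) / (Real.sqrt κ + 1))
    (hc₀ : c₀ = max (1 / lammin) ((1 + Real.sqrt κ) ^ 2 / (2 * lammax))) :
    ∀ i j : Fin n,
      |A⁻¹ i j| ≤ c₀ * q ^ ((|(i : ℤ) - (j : ℤ)| : ℝ) / (β : ℝ)) := by
  intro i j
  have hA : A.IsHermitian := hpd.1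
  set U : Matrix (Fin n) (Fin n) ℝ := (hA.eigenvectorUnitary : Matrix (Fin n) (Fin n) ℝ)
    with hU_def
  set V : Matrix (Fin n) (Fin n) ℝ := star U with hV_def
  set d : Fin n → ℝ := hA.eigenvalues with hd_def
  have hUV : U * V = 1 := mem_unitaryGroup_iff.mp hA.eigenvectorUnitary.2
  have hVU : V * U = 1 := mem_unitaryGroup_iff'.mp hA.eigenvectorUnitary.2
  have hspec : A = U * Matrix.diagonal d * V := by
    have h := hA.spectral_theorem
    rwa [RCLike.ofReal_real_eq_id, Function.id_comp] at h
  -- eigenvalue facts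
  have hd_pos : ∀ m, 0 < d m := fun m => hpd.eigenvalues_pos m
  have hd_lo : ∀ m, lammin ≤ d m := fun m => hmin _ (hA.eigenvalues_mem_spectrum_real m)
  have hd_hi : ∀ m, d m ≤ lammax := fun m => hmax _ (hA.eigenvalues_mem_spectrum_real m)
  have hmin_pos : 0 < lammin := by
    have : lammin ∈ Set.range hA.eigenvalues := hA.spectrum_real_eq_range_eigenvalues ▸ hmin_mem
    obtain ⟨m, hm⟩ := this
    rw [← hm]; exact hd_pos m
  have hmax_pos : 0 < lammax := hmin_pos.trans_le (hmax _ hmin_mem)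
  have hminmax : lammin ≤ lammax := hmax _ hmin_mem
  -- powers
  have hAm : ∀ m : ℕ, A ^ m = U * Matrix.diagonal (fun i => d i ^ m) * V := by
    intro m
    induction m with
    | zero =>
      simp only [pow_zero]
      rw [show Matrix.diagonal (fun _ : Fin n => (1:ℝ)) = 1 from Matrix.diagonal_one,
        Matrix.mul_one, hUV]
    | succ m ih =>
      rw [pow_succ, ih, hspec]
      have : U * Matrix.diagonal (fun i => d i ^ m) * V * (U * Matrix.diagonal d * V)
          = U * (Matrix.diagonal (fun i => d i ^ m) * (V * U) * Matrix.diagonal d) * V := by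
        simp only [Matrix.mul_assoc]
      rw [this, hVU, Matrix.mul_one, Matrix.diagonal_mul_diagonal]
      have h2 : (fun i => d i ^ m * d i) = fun i => d i ^ (m+1) :=
        funext fun i' => (pow_succ _ _).symm
      rw [h2]
  -- inverse
  have hinvA : A⁻¹ = U * Matrix.diagonal (fun i => (d i)⁻¹) * V := by
    apply Matrix.inv_eq_right_inv
    rw [hspec]
    have : U * Matrix.diagonal d * V * (U * Matrix.diagonal (fun i => (d i)⁻¹) * V)
        = U * (Matrix.diagonal d * (V * U) * Matrix.diagonal (fun i => (d i)⁻¹)) * V := by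
      simp only [Matrix.mul_assoc]
    rw [this, hVU, Matrix.mul_one, Matrix.diagonal_mul_diagonal]
    have : (fun i => d i * (d i)⁻¹) = fun _ : Fin n => (1:ℝ) := by
      funext m; exact mul_inv_cancel₀ (hd_pos m).ne'
    rw [this, Matrix.diagonal_one, Matrix.mul_one, hUV]
  -- entries of conjugated diagonal matrices
  have hentry : ∀ (w : Fin n → ℝ) (i' j' : Fin n),
      (U * Matrix.diagonal w * V) i' j' = ∑ m, U i' m * w m * U j' m := by
    intro w i' j'
    rw [Matrix.mul_apply]
    congr 1
    funext m
    rw [Matrix.mul_diagonal]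
    rw [hV_def, Matrix.star_apply]
    simp [mul_comm]
  have hrow : ∀ (i' : Fin n), ∑ m, (U i' m)^2 = 1 := by
    intro i'
    have h1 : (U * V) i' i' = 1 := by rw [hUV]; simp
    rw [Matrix.mul_apply] at h1
    rw [← h1]
    congr 1
    funext m
    rw [hV_def, Matrix.star_apply]
    simp [sq]
  have habs : ∀ (w : Fin n → ℝ) (K : ℝ), (∀ m, |w m| ≤ K) →
      |(U * Matrix.diagonal w * V) i j| ≤ K := by
    intro w K hw
    have hK0 : 0 ≤ K := le_trans (abs_nonneg _) (hw i)
    rw [hentry w i j]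
    calc |∑ m, U i m * w m * U j m| ≤ ∑ m, |U i m * w m * U j m| :=
          Finset.abs_sum_le_sum_abs _ _
      _ = ∑ m, |U i m| * |w m| * |U j m| := by
          congr 1; funext m; rw [abs_mul, abs_mul]
      _ ≤ ∑ m, |U i m| * K * |U j m| := by
          apply Finset.sum_le_sum
          intro m _
          apply mul_le_mul_of_nonneg_right _ (abs_nonneg _)
          exact mul_le_mul_of_nonneg_left (hw m) (abs_nonneg _)
      _ = K * ∑ m, |U i m| * |U j m| := by rw [Finset.mul_sum]; congr 1; funext m; ring
      _ ≤ K * 1 := by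
          apply mul_le_mul_of_nonneg_left _ hK0
          have hcs := Finset.sum_mul_sq_le_sq_mul_sq Finset.univ
            (fun m => |U i m|) (fun m => |U j m|)
          have h1 : ∑ m, |U i m|^2 = 1 := by
            rw [← hrow i]; congr 1; funext m; rw [sq_abs]
          have h2 : ∑ m, |U j m|^2 = 1 := by
            rw [← hrow j]; congr 1; funext m; rw [sq_abs]
          rw [h1, h2, mul_one] at hcs
          have hnn : 0 ≤ ∑ m, |U i m| * |U j m| :=
            Finset.sum_nonneg fun m _ => mul_nonneg (abs_nonneg _) (abs_nonneg _)
          nlinarith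
      _ = K := mul_one K
  -- banded powers
  have hband_pow : ∀ (m : ℕ) (i' j' : Fin n), ((m*β : ℕ) : ℤ) < |(i':ℤ) - (j':ℤ)| →
      (A^m) i' j' = 0 := by
    intro m
    induction m with
    | zero =>
      intro i' j' h
      simp only [Nat.zero_mul, Nat.cast_zero] at h
      have : i' ≠ j' := by
        intro he
        rw [he] at h
        simp at h
      rw [pow_zero]
      exact Matrix.one_apply_ne this
    | succ m ih =>
      intro i' j' h
      rw [pow_succ, Matrix.mul_apply]
      apply Finset.sum_eq_zero
      intro l _
      by_cases hl : ((m*β : ℕ) : ℤ) < |(i':ℤ) - (l:ℤ)|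
      · rw [ih i' l hl, zero_mul]
      · push_neg at hl
        have hlj : (β : ℤ) < |(l:ℤ) - (j':ℤ)| := by
          have htr := abs_sub_le (i':ℤ) (l:ℤ) (j':ℤ)
          push_cast at h hl ⊢
          linarith
        rw [hband l j' hlj, mul_zero]
  -- case split on degenerate spectrum
  rcases eq_or_lt_of_le hminmax with heq | hlt
  · -- degenerate case : lammin = lammax, A = lammin • 1
    have hdall : ∀ m, d m = lammin := fun m => le_antisymm (heq ▸ hd_hi m) (hd_lo m)
    have hA_eq : A = lammin • (1 : Matrix (Fin n) (Fin n) ℝ) := by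
      rw [hspec]
      have h1 : d = fun _ => lammin := funext hdall
      rw [h1, ← Matrix.smul_one_eq_diagonal, Matrix.mul_smul, Matrix.smul_mul, Matrix.mul_one,
        hUV]
    have hAinv : A⁻¹ = lammin⁻¹ • (1 : Matrix (Fin n) (Fin n) ℝ) := by
      apply Matrix.inv_eq_right_inv
      rw [hA_eq, smul_mul_smul_comm, one_mul, mul_inv_cancel₀ hmin_pos.ne', one_smul]
    have hκ1 : κ = 1 := by rw [hκ, ← heq, div_self hmin_pos.ne']
    have hq0 : q = 0 := by rw [hq, hκ1, Real.sqrt_one]; norm_num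
    have hc₀1 : 1/lammin ≤ c₀ := hc₀ ▸ le_max_left _ _
    by_cases hij : (i:ℤ) = (j:ℤ)
    · have hij' : i = j := Fin.ext (by exact_mod_cast hij)
      subst hij'
      rw [hAinv]
      simp only [Matrix.smul_apply, Matrix.one_apply_eq, smul_eq_mul, mul_one,
        sub_self, abs_zero, zero_div, Real.rpow_zero]
      rw [abs_of_pos (inv_pos.2 hmin_pos), ← one_div]
      exact hc₀1
    · have hij' : i ≠ j := fun he => hij (by rw [he])
      rw [hAinv, Matrix.smul_apply, Matrix.one_apply_ne hij', smul_zero, abs_zero]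
      exact mul_nonneg (le_trans (by positivity) hc₀1) (Real.rpow_nonneg (by rw [hq0]) _)
  · -- main case : lammin < lammax
    have hκ1 : 1 < κ := by rw [hκ]; exact (one_lt_div hmin_pos).2 hlt
    have hs1 : 1 < Real.sqrt κ := by
      rw [show (1:ℝ) = Real.sqrt 1 from (Real.sqrt_one).symm]
      exact Real.sqrt_lt_sqrt (by norm_num) hκ1
    have hq0 : 0 < q := by rw [hq]; apply div_pos <;> linarith
    have hq1 : q < 1 := by rw [hq, div_lt_one (by linarith)]; linarith
    have hc₀nn : 0 ≤ c₀ := le_trans (by positivity) (hc₀ ▸ le_max_left (1/lammin) _)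
    by_cases hij : (i:ℤ) = (j:ℤ)
    · have hij' : i = j := Fin.ext (by exact_mod_cast hij)
      subst hij'
      simp only [sub_self, abs_zero, zero_div, Real.rpow_zero, mul_one]
      have h1 : |A⁻¹ i i| ≤ 1/lammin := by
        rw [hinvA]
        apply habs
        intro m
        rw [abs_of_pos (inv_pos.2 (hd_pos m)), ← one_div]
        exact one_div_le_one_div_of_le hmin_pos (hd_lo m)
      exact le_trans h1 (hc₀ ▸ le_max_left _ _)
    · -- off-diagonal
      have hij_pos : 0 < |(i:ℤ) - (j:ℤ)| := abs_pos.2 (sub_ne_zero.2 hij)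
      set dn : ℕ := (|(i:ℤ) - (j:ℤ)|).toNat with hdn_def
      have hdZ : (dn : ℤ) = |(i:ℤ) - (j:ℤ)| := Int.toNat_of_nonneg (abs_nonneg _)
      have hdn1 : 1 ≤ dn := by omega
      set k : ℕ := (dn - 1)/β with hk_def
      have hdm : β * k + (dn-1) % β = dn - 1 := by rw [hk_def]; exact Nat.div_add_mod _ _
      have hmod : (dn-1) % β < β := Nat.mod_lt _ (by omega)
      have hcomm : β * k = k * β := Nat.mul_comm β k
      have hk1 : k*β ≤ dn-1 := by omega
      have hk2 : dn ≤ (k+1)*β := by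
        have h8 : (k+1)*β = k*β + β := by ring
        omega
      obtain ⟨p, hdp, hbd⟩ := approx_inv lammin lammax hmin_pos hlt k
      rw [← hκ, ← hq] at hbd
      set F : Matrix (Fin n) (Fin n) ℝ :=
        ∑ m ∈ Finset.range (p.natDegree+1), p.coeff m • A^m with hF_def
      have hFij : F i j = 0 := by
        rw [hF_def, Matrix.sum_apply]
        apply Finset.sum_eq_zero
        intro m hm
        rw [Matrix.smul_apply]
        have hm' : m ≤ k := le_trans (Nat.lt_succ_iff.mp (Finset.mem_range.mp hm)) hdp
        have hmm : ((m*β : ℕ):ℤ) < |(i:ℤ)-(j:ℤ)| := by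
          have h3 : m*β ≤ k*β := Nat.mul_le_mul_right _ hm'
          have h4 : m*β < dn := by omega
          rw [← hdZ]
          exact_mod_cast h4
        rw [hband_pow m i j hmm, smul_zero]
      have hFdiag : F = U * Matrix.diagonal (fun m => Polynomial.eval (d m) p) * V := by
        rw [hF_def]
        have h1 : ∀ m ∈ Finset.range (p.natDegree+1), p.coeff m • A^m
            = U * (p.coeff m • Matrix.diagonal (fun i' => d i' ^ m)) * V := by
          intro m _
          rw [hAm m, Matrix.mul_smul, Matrix.smul_mul]
        rw [Finset.sum_congr rfl h1, ← Finset.sum_mul, ← Finset.mul_sum]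
        congr 2
        ext i' j'
        rw [Matrix.sum_apply]
        by_cases hij' : i' = j'
        · subst hij'
          simp only [Matrix.smul_apply, Matrix.diagonal_apply_eq, smul_eq_mul]
          exact (Polynomial.eval_eq_sum_range _).symm
        · simp [Matrix.diagonal_apply_ne _ hij']
      have hdiff : |A⁻¹ i j| ≤ (1 + Real.sqrt κ)^2/(2*lammax) * q^(k+1) := by
        have hsub : A⁻¹ - F
            = U * Matrix.diagonal (fun m => (d m)⁻¹ - Polynomial.eval (d m) p) * V := by
          rw [hinvA, hFdiag, ← Matrix.diagonal_sub, Matrix.mul_sub, Matrix.sub_mul]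
        have h4 : |A⁻¹ i j| = |(A⁻¹ - F) i j| := by rw [Matrix.sub_apply, hFij, sub_zero]
        rw [h4, hsub]
        apply habs
        intro m
        have h5 := hbd (d m) ⟨hd_lo m, hd_hi m⟩
        rwa [one_div] at h5
      -- final estimate
      have hβR : (0:ℝ) < (β:ℝ) := by exact_mod_cast hβ
      have hcast : |((i:ℤ):ℝ) - ((j:ℤ):ℝ)| = (dn:ℝ) := by
        rw [← Int.cast_sub, ← Int.cast_abs, ← hdZ]
        norm_num
      rw [hcast]
      have hexp : (dn:ℝ)/(β:ℝ) ≤ ((k+1 : ℕ):ℝ) := by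
        rw [div_le_iff₀ hβR]
        exact_mod_cast hk2
      have h6 : q^(k+1) = q ^ (((k+1:ℕ):ℝ)) := (Real.rpow_natCast q (k+1)).symm
      rw [h6] at hdiff
      refine le_trans hdiff (mul_le_mul (hc₀ ▸ le_max_right _ _) ?_ (Real.rpow_nonneg hq0.le _)
        hc₀nn)
      exact Real.rpow_le_rpow_of_exponent_ge hq0 hq1.le hexp
end

section
/- Let A be an n×n real symmetric positive definite matrix with smallest eigenvalue λ_min > 0, and let X be the unique solution of A X + X A = e_{t₁} e_{t₂}^T. Then the diagonal-peak entry satisfies |X_{t₁,t₂}| ≤ (1/(2π)) ∫_{−∞}^{∞} 1/(λ_min² + ω²) dω = 1/(2 λ_min). -/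
open Matrix MeasureTheory

/-- **Bound on the peak entry of the Lyapunov solution.**
`A` real symmetric positive definite with smallest eigenvalue `λ_min > 0`, `X` solves
`A X + X A = e_{t₁} e_{t₂}ᵀ`. Then `|X_{t₁,t₂}| ≤ (1/(2π)) ∫ 1/(λ_min² + ω²) dω = 1/(2 λ_min)`. -/
theorem lyapunov_entry_peak_bound
    (n : ℕ) (A : Matrix (Fin n) (Fin n) ℝ)
    (hsymm : A.IsSymm) (hpd : A.PosDef)
    (lammin : ℝ) (hpos : 0 < lammin)
    (hmin_mem : lammin ∈ spectrum ℝ A)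
    (hmin : ∀ μ ∈ spectrum ℝ A, lammin ≤ μ)
    (t₁ t₂ : Fin n) (X : Matrix (Fin n) (Fin n) ℝ)
    (hX : A * X + X * A = Matrix.single t₁ t₂ 1) :
    (1 / (2 * Real.pi)) * (∫ ω : ℝ, 1 / (lammin ^ 2 + ω ^ 2)) = 1 / (2 * lammin) ∧
    |X t₁ t₂| ≤ 1 / (2 * lammin) := by
  constructor
  · have h1 : (fun ω : ℝ => 1 / (lammin ^ 2 + ω ^ 2))
        = fun ω : ℝ => (lammin ^ 2)⁻¹ • ((fun x : ℝ => (1 + x ^ 2)⁻¹) (ω / lammin)) := by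
      funext ω
      have : lammin ^ 2 ≠ 0 := by positivity
      simp only [smul_eq_mul]
      field_simp
    rw [h1, integral_smul, Measure.integral_comp_div (fun x : ℝ => (1 + x ^ 2)⁻¹) lammin,
      integral_univ_inv_one_add_sq]
    rw [abs_of_pos hpos]
    have hπ := Real.pi_pos
    field_simp
    simp only [smul_eq_mul]; field_simp
  · have hA : A.IsHermitian := hpd.1
    set U : Matrix (Fin n) (Fin n) ℝ := (hA.eigenvectorUnitary : Matrix (Fin n) (Fin n) ℝ) with hUdef
    set d : Fin n → ℝ := hA.eigenvalues with hddef
    have hUU : U * star U = 1 := mem_unitaryGroup_iff.mp hA.eigenvectorUnitary.2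
    have hUU' : star U * U = 1 := mem_unitaryGroup_iff'.mp hA.eigenvectorUnitary.2
    have hdl : ∀ i, lammin ≤ d i := fun i => hmin _ (hA.eigenvalues_mem_spectrum_real i)
    have hdiag : star U * A * U = Matrix.diagonal d := by
      have := hA.conjStarAlgAut_star_eigenvectorUnitary
      simpa [Unitary.conjStarAlgAut_star_apply] using this
    set Y : Matrix (Fin n) (Fin n) ℝ := star U * X * U with hY
    have key : ∀ B C : Matrix (Fin n) (Fin n) ℝ,
        (star U * B * U) * (star U * C * U) = star U * (B * C) * U := by
      intro B C
      calc (star U * B * U) * (star U * C * U)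
          = (star U * B) * (U * star U) * (C * U) := by simp only [Matrix.mul_assoc]
        _ = star U * (B * C) * U := by rw [hUU, Matrix.mul_one]; simp only [Matrix.mul_assoc]
    have hXY : X = U * Y * star U := by
      have : U * (star U * X * U) * star U = (U * star U) * X * (U * star U) := by
        simp only [Matrix.mul_assoc]
      rw [hY, this, hUU, Matrix.one_mul, Matrix.mul_one]
    have hDY : Matrix.diagonal d * Y + Y * Matrix.diagonal d
        = star U * Matrix.single t₁ t₂ 1 * U := by
      calc Matrix.diagonal d * Y + Y * Matrix.diagonal d
          = (star U * A * U) * (star U * X * U) + (star U * X * U) * (star U * A * U) := by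
            rw [hdiag]
        _ = star U * (A * X + X * A) * U := by
            rw [key, key, ← Matrix.add_mul, ← Matrix.mul_add]
        _ = _ := by rw [hX]
    have hdd : ∀ i j : Fin n, 0 < d i + d j := fun i j => by
      have := hdl i; have := hdl j; linarith
    have hYentry : ∀ i j, Y i j = (U t₁ i * U t₂ j) / (d i + d j) := by
      intro i j
      have h := congrFun (congrFun hDY i) j
      have hL : (Matrix.diagonal d * Y + Y * Matrix.diagonal d) i j = (d i + d j) * Y i j := by
        simp [Matrix.add_apply, Matrix.diagonal_mul, Matrix.mul_diagonal]; ring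
      have hR : (star U * Matrix.single t₁ t₂ (1:ℝ) * U : Matrix (Fin n) (Fin n) ℝ) i j = U t₁ i * U t₂ j := by
        simp [Matrix.mul_apply, Matrix.single, Matrix.star_apply, ite_and,
          Finset.sum_ite_eq, Finset.sum_ite_eq', Finset.mul_sum, Finset.sum_mul]
      rw [hL, hR] at h
      field_simp [(hdd i j).ne']
      linarith [h]
    have hXentry : X t₁ t₂ = ∑ i, ∑ j, (U t₁ i * U t₂ j) ^ 2 / (d i + d j) := by
      have h0 : X t₁ t₂ = ∑ j, ∑ i, U t₁ i * Y i j * U t₂ j := by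
        rw [hXY, Matrix.mul_apply]
        simp only [Matrix.mul_apply, Matrix.star_apply, star_trivial, Finset.sum_mul]
      rw [h0, Finset.sum_comm]
      refine Finset.sum_congr rfl fun i _ => Finset.sum_congr rfl fun j _ => ?_
      rw [hYentry i j]
      field_simp
    have hrow1 : ∑ i, (U t₁ i) ^ 2 = 1 := by
      have := congrFun (congrFun hUU t₁) t₁
      simpa [Matrix.mul_apply, Matrix.star_apply, Matrix.one_apply, sq] using this
    have hrow2 : ∑ j, (U t₂ j) ^ 2 = 1 := by
      have := congrFun (congrFun hUU t₂) t₂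
      simpa [Matrix.mul_apply, Matrix.star_apply, Matrix.one_apply, sq] using this
    have hnn : 0 ≤ X t₁ t₂ := by
      rw [hXentry]
      refine Finset.sum_nonneg fun i _ => Finset.sum_nonneg fun j _ => ?_
      exact div_nonneg (sq_nonneg _) (hdd i j).le
    rw [abs_of_nonneg hnn, hXentry]
    calc ∑ i, ∑ j, (U t₁ i * U t₂ j) ^ 2 / (d i + d j)
        ≤ ∑ i, ∑ j, (U t₁ i * U t₂ j) ^ 2 / (2 * lammin) := by
          refine Finset.sum_le_sum fun i _ => Finset.sum_le_sum fun j _ => ?_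
          apply div_le_div_of_nonneg_left (by positivity) (by positivity)
          have := hdl i; have := hdl j; linarith
      _ = 1 / (2 * lammin) := by
          have : ∀ i : Fin n, ∑ j, (U t₁ i * U t₂ j) ^ 2 / (2 * lammin)
              = (U t₁ i) ^ 2 * ((∑ j, (U t₂ j) ^ 2) / (2 * lammin)) := by
            intro i
            rw [Finset.sum_div, Finset.mul_sum]
            refine Finset.sum_congr rfl fun j _ => ?_
            field_simp
          simp only [this, hrow2, ← Finset.sum_mul, hrow1]
          ring
end

section
/- Let A be an n×n Hermitian positive definite complex matrix and fix indices i, j. Then the function ω ↦ (iωI + A)^{-1} e_i e_j^T ((iωI + A)^H)^{-1} is Bochner integrable on ℝ, and the matrix X = (1/(2π)) ∫_{−∞}^{∞} (iωI + A)^{-1} e_i e_j^T ((iωI + A)^H)^{-1} dω satisfies A X + X A = e_i e_j^T. -/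
open Matrix MeasureTheory
open scoped ComplexOrder

attribute [local instance] Matrix.frobeniusNormedAddCommGroup Matrix.frobeniusNormedSpace

section Aux

open Real

private lemma integrable_inv_sq_add' (a : ℝ) (ha : 0 < a) :
    Integrable (fun x : ℝ => (a ^ 2 + x ^ 2)⁻¹) := by
  have h : (fun x : ℝ => (a ^ 2 + x ^ 2)⁻¹)
      = fun x : ℝ => a⁻¹ ^ 2 * (1 + (a⁻¹ * x) ^ 2)⁻¹ := by
    funext x
    field_simp
  rw [h]
  exact ((integrable_comp_mul_left_iff (fun y : ℝ => (1 + y ^ 2)⁻¹)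
    (inv_ne_zero ha.ne')).2 integrable_inv_one_add_sq).const_mul _

private lemma integral_inv_sq_add' (a : ℝ) (ha : 0 < a) :
    ∫ x : ℝ, (a ^ 2 + x ^ 2)⁻¹ = π / a := by
  have h : (fun x : ℝ => (a ^ 2 + x ^ 2)⁻¹)
      = fun x : ℝ => a⁻¹ ^ 2 * (1 + (a⁻¹ * x) ^ 2)⁻¹ := by
    funext x; field_simp
  rw [h, integral_const_mul, Measure.integral_comp_mul_left (fun y : ℝ => (1 + y ^ 2)⁻¹),
    integral_univ_inv_one_add_sq]
  rw [abs_of_pos (by positivity), smul_eq_mul]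
  field_simp

private lemma integral_odd_zero' (f : ℝ → ℝ) (hf : ∀ x, f (-x) = - f x) :
    ∫ x : ℝ, f x = 0 := by
  have h := integral_neg_eq_self f volume
  simp only [hf, integral_neg] at h
  linarith

private lemma integrable_odd_part' (a b : ℝ) (ha : 0 < a) (hb : 0 < b) :
    Integrable (fun x : ℝ => x * ((a ^ 2 + x ^ 2)⁻¹ * (b ^ 2 + x ^ 2)⁻¹)) := by
  refine Integrable.mono' ((integrable_inv_sq_add' b hb).const_mul (2 * a)⁻¹)
    (Continuous.aestronglyMeasurable (continuous_id.mul
      (((continuous_const.add (continuous_pow 2)).inv₀ (fun x => (by positivity : (0:ℝ) < a ^ 2 + x ^ 2).ne')).mul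
       ((continuous_const.add (continuous_pow 2)).inv₀ (fun x => (by positivity : (0:ℝ) < b ^ 2 + x ^ 2).ne')))))
    (Filter.Eventually.of_forall fun x => ?_)
  have h1 : (0:ℝ) < a ^ 2 + x ^ 2 := by positivity
  have h2 : (0:ℝ) < b ^ 2 + x ^ 2 := by positivity
  rw [Real.norm_eq_abs, abs_mul, abs_mul, abs_inv, abs_inv, abs_of_pos h1, abs_of_pos h2]
  have hx : |x| ≤ (a ^ 2 + x ^ 2) / (2 * a) := by
    rw [le_div_iff₀ (by positivity)]
    nlinarith [sq_nonneg (|x| - a), sq_abs x, abs_nonneg x]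
  calc |x| * ((a ^ 2 + x ^ 2)⁻¹ * (b ^ 2 + x ^ 2)⁻¹)
      ≤ ((a ^ 2 + x ^ 2) / (2 * a)) * ((a ^ 2 + x ^ 2)⁻¹ * (b ^ 2 + x ^ 2)⁻¹) := by
        apply mul_le_mul_of_nonneg_right hx; positivity
    _ = (2 * a)⁻¹ * (b ^ 2 + x ^ 2)⁻¹ := by field_simp

private lemma scalar_key (a b : ℝ) (ha : 0 < a) (hb : 0 < b) :
    Integrable (fun x : ℝ => ((a : ℂ) + Complex.I * x)⁻¹ * ((b : ℂ) - Complex.I * x)⁻¹) ∧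
    ∫ x : ℝ, ((a : ℂ) + Complex.I * x)⁻¹ * ((b : ℂ) - Complex.I * x)⁻¹
      = ((2 * π / (a + b) : ℝ) : ℂ) := by
  set r1 : ℝ → ℝ := fun x => (a + b)⁻¹ * (a * (a ^ 2 + x ^ 2)⁻¹ + b * (b ^ 2 + x ^ 2)⁻¹) with hr1
  set r2 : ℝ → ℝ := fun x =>
    (a + b)⁻¹ * ((a ^ 2 - b ^ 2) * (x * ((a ^ 2 + x ^ 2)⁻¹ * (b ^ 2 + x ^ 2)⁻¹))) with hr2
  have hab : a + b ≠ 0 := by positivity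
  set_option maxHeartbeats 1000000 in
  have key : ∀ x : ℝ, ((a : ℂ) + Complex.I * x)⁻¹ * ((b : ℂ) - Complex.I * x)⁻¹
      = ((r1 x : ℝ) : ℂ) + ((r2 x : ℝ) : ℂ) * Complex.I := by
    intro x
    have h1 : (0:ℝ) < a ^ 2 + x ^ 2 := by positivity
    have h2 : (0:ℝ) < b ^ 2 + x ^ 2 := by positivity
    rw [← _root_.mul_inv ((a:ℂ) + Complex.I * x) ((b:ℂ) - Complex.I * x), eq_comm]
    simp only [hr1, hr2]
    refine (inv_eq_of_mul_eq_one_right ?_).symm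
    push_cast
    have hc1 : ((a:ℂ) + b) ≠ 0 := by exact_mod_cast hab
    have hc2 : ((a:ℂ) ^ 2 + (x:ℂ) ^ 2) ≠ 0 := by exact_mod_cast h1.ne'
    have hc3 : ((b:ℂ) ^ 2 + (x:ℂ) ^ 2) ≠ 0 := by exact_mod_cast h2.ne'
    field_simp
    apply Complex.ext <;> simp [← Complex.ofReal_pow] <;> ring
  have hint1 : Integrable r1 := by
    exact (((integrable_inv_sq_add' a ha).const_mul a).add
      ((integrable_inv_sq_add' b hb).const_mul b)).const_mul _
  have hint2 : Integrable r2 := ((integrable_odd_part' a b ha hb).const_mul _).const_mul _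
  have hi1 : Integrable (fun x : ℝ => ((r1 x : ℝ) : ℂ)) := hint1.ofReal
  have hi2 : Integrable (fun x : ℝ => ((r2 x : ℝ) : ℂ) * Complex.I) := hint2.ofReal.mul_const _
  have hint : Integrable
      (fun x : ℝ => ((a : ℂ) + Complex.I * x)⁻¹ * ((b : ℂ) - Complex.I * x)⁻¹) := by
    rw [funext key]
    exact hi1.add hi2
  refine ⟨hint, ?_⟩
  rw [funext key, integral_add hi1 hi2, integral_mul_const]
  have e1 : (∫ x : ℝ, ((r1 x : ℝ) : ℂ)) = ((∫ x : ℝ, r1 x : ℝ) : ℂ) := integral_ofReal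
  have e2 : (∫ x : ℝ, ((r2 x : ℝ) : ℂ)) = ((∫ x : ℝ, r2 x : ℝ) : ℂ) := integral_ofReal
  rw [e1, e2]
  have hv2 : ∫ x : ℝ, r2 x = 0 := by
    apply integral_odd_zero'
    intro x; simp only [hr2]; ring
  have hv1 : ∫ x : ℝ, r1 x = 2 * π / (a + b) := by
    simp only [hr1]
    rw [integral_const_mul, integral_add ((integrable_inv_sq_add' a ha).const_mul a)
      ((integrable_inv_sq_add' b hb).const_mul b), integral_const_mul, integral_const_mul,
      integral_inv_sq_add' a ha, integral_inv_sq_add' b hb]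
    field_simp
    ring
  rw [hv1, hv2]
  simp

private noncomputable def entryCLM (n : ℕ) (p q : Fin n) : Matrix (Fin n) (Fin n) ℂ →L[ℂ] ℂ :=
  LinearMap.toContinuousLinearMap
    { toFun := fun M => M p q
      map_add' := fun _ _ => rfl
      map_smul' := fun _ _ => rfl }

private noncomputable def mulCLM {n : ℕ} (U V : Matrix (Fin n) (Fin n) ℂ) :
    Matrix (Fin n) (Fin n) ℂ →L[ℂ] Matrix (Fin n) (Fin n) ℂ :=
  LinearMap.toContinuousLinearMap
    { toFun := fun M => U * M * V
      map_add' := fun M N => by noncomm_ring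
      map_smul' := fun c M => by simp [Matrix.mul_smul, Matrix.smul_mul] }

private lemma integrable_of_entries {n : ℕ} (f : ℝ → Matrix (Fin n) (Fin n) ℂ)
    (h : ∀ p q, Integrable fun ω => f ω p q) :
    @Integrable (Matrix (Fin n) (Fin n) ℂ) frobeniusNormedAddCommGroup.toUniformSpace.toTopologicalSpace _ ℝ _ f volume := by
  have hrep : f = fun ω => ∑ p : Fin n, ∑ q : Fin n, (f ω p q) • single p q (1 : ℂ) := by
    funext ω
    conv_lhs => rw [matrix_eq_sum_single (f ω)]
    simp [smul_single]
  rw [hrep]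
  exact integrable_finset_sum _ fun p _ =>
    integrable_finset_sum _ fun q _ => (h p q).smul_const _

private lemma integrable_mul_mul {n : ℕ} {f : ℝ → Matrix (Fin n) (Fin n) ℂ}
    (hf : @Integrable (Matrix (Fin n) (Fin n) ℂ) frobeniusNormedAddCommGroup.toUniformSpace.toTopologicalSpace _ ℝ _ f volume)
    (U V : Matrix (Fin n) (Fin n) ℂ) :
    @Integrable (Matrix (Fin n) (Fin n) ℂ) frobeniusNormedAddCommGroup.toUniformSpace.toTopologicalSpace _ ℝ _ (fun ω => U * f ω * V) volume :=
  (mulCLM U V).integrable_comp hf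

private lemma integral_mul_mul {n : ℕ} {f : ℝ → Matrix (Fin n) (Fin n) ℂ}
    (hf : @Integrable (Matrix (Fin n) (Fin n) ℂ) frobeniusNormedAddCommGroup.toUniformSpace.toTopologicalSpace _ ℝ _ f volume)
    (U V : Matrix (Fin n) (Fin n) ℂ) :
    ∫ ω : ℝ, U * f ω * V = U * (∫ ω : ℝ, f ω) * V :=
  ((mulCLM U V).integral_comp_comm hf)

private lemma integral_entry {n : ℕ} {f : ℝ → Matrix (Fin n) (Fin n) ℂ}
    (hf : @Integrable (Matrix (Fin n) (Fin n) ℂ) frobeniusNormedAddCommGroup.toUniformSpace.toTopologicalSpace _ ℝ _ f volume)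
    (p q : Fin n) : (∫ ω : ℝ, f ω) p q = ∫ ω : ℝ, f ω p q :=
  ((entryCLM n p q).integral_comp_comm hf).symm

end Aux

/-- **Resolvent-integral closed form with single-entry right-hand side.**
For `A` Hermitian positive definite, the function
`ω ↦ (iωI + A)⁻¹ eᵢ eⱼᵀ ((iωI + A)ᴴ)⁻¹` is Bochner integrable on `ℝ` and
`X = (1/(2π)) ∫_ℝ (iωI + A)⁻¹ eᵢ eⱼᵀ ((iωI + A)ᴴ)⁻¹ dω` satisfies `A X + X A = eᵢ eⱼᵀ`. -/
theorem lyapunov_resolvent_integral_single_entry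
    (n : ℕ) (A : Matrix (Fin n) (Fin n) ℂ)
    (hA : A.PosDef) (i j : Fin n) :
    @Integrable (Matrix (Fin n) (Fin n) ℂ)
      frobeniusNormedAddCommGroup.toUniformSpace.toTopologicalSpace _ ℝ _
      (fun ω : ℝ => ((Complex.I * ω) • (1 : Matrix (Fin n) (Fin n) ℂ) + A)⁻¹ *
        Matrix.single i j (1 : ℂ) *
        ((((Complex.I * ω) • (1 : Matrix (Fin n) (Fin n) ℂ) + A)ᴴ)⁻¹)) volume ∧
    A * ((1 / (2 * Real.pi)) •
        ∫ ω : ℝ, ((Complex.I * ω) • (1 : Matrix (Fin n) (Fin n) ℂ) + A)⁻¹ *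
          Matrix.single i j (1 : ℂ) *
          ((((Complex.I * ω) • (1 : Matrix (Fin n) (Fin n) ℂ) + A)ᴴ)⁻¹)) +
      ((1 / (2 * Real.pi)) •
        ∫ ω : ℝ, ((Complex.I * ω) • (1 : Matrix (Fin n) (Fin n) ℂ) + A)⁻¹ *
          Matrix.single i j (1 : ℂ) *
          ((((Complex.I * ω) • (1 : Matrix (Fin n) (Fin n) ℂ) + A)ᴴ)⁻¹)) * A
      = Matrix.single i j (1 : ℂ) := by
  classical
  have hH : A.IsHermitian := hA.1
  set U : Matrix (Fin n) (Fin n) ℂ := (hH.eigenvectorUnitary : Matrix (Fin n) (Fin n) ℂ) with hUdef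
  set d : Fin n → ℝ := hH.eigenvalues with hddef
  have hd : ∀ k, 0 < d k := fun k => hA.eigenvalues_pos k
  have hU1 : U * Uᴴ = 1 := by
    rw [← Matrix.star_eq_conjTranspose]
    exact Matrix.mem_unitaryGroup_iff.mp (hH.eigenvectorUnitary).2
  have hU2 : Uᴴ * U = 1 := by
    rw [← Matrix.star_eq_conjTranspose]
    exact Matrix.mem_unitaryGroup_iff'.mp (hH.eigenvectorUnitary).2
  have hspec : A = U * diagonal (fun k => (d k : ℂ)) * Uᴴ := by
    have h := hH.spectral_theorem
    rw [← Matrix.star_eq_conjTranspose]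
    exact h
  set E : Matrix (Fin n) (Fin n) ℂ := Matrix.single i j (1 : ℂ) with hEdef
  set F : Matrix (Fin n) (Fin n) ℂ := Uᴴ * E * U with hFdef
  set v : ℝ → Fin n → ℂ := fun ω k => (d k : ℂ) + Complex.I * ω with hvdef
  set w : ℝ → Fin n → ℂ := fun ω k => (d k : ℂ) - Complex.I * ω with hwdef
  have hvne : ∀ (ω : ℝ) k, v ω k ≠ 0 := by
    intro ω k h
    have h' := congrArg Complex.re h
    simp [hvdef] at h'
    exact (hd k).ne' h'
  have hwne : ∀ (ω : ℝ) k, w ω k ≠ 0 := by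
    intro ω k h
    have h' := congrArg Complex.re h
    simp [hwdef] at h'
    exact (hd k).ne' h'
  -- resolvents in the eigenbasis
  have hS : ∀ ω : ℝ, (Complex.I * ω) • (1 : Matrix (Fin n) (Fin n) ℂ) + A
      = U * diagonal (v ω) * Uᴴ := by
    intro ω
    have hdiag : diagonal (v ω)
        = (Complex.I * ω) • (1 : Matrix (Fin n) (Fin n) ℂ) + diagonal (fun k => (d k : ℂ)) := by
      rw [Matrix.smul_one_eq_diagonal, Matrix.diagonal_add]
      exact congrArg diagonal (funext fun k => by simp only [hvdef]; ring)
    rw [hdiag, Matrix.mul_add, Matrix.add_mul, Matrix.mul_smul, Matrix.smul_mul, Matrix.mul_one,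
      hU1, ← hspec]
  have hSH : ∀ ω : ℝ, ((Complex.I * ω) • (1 : Matrix (Fin n) (Fin n) ℂ) + A)ᴴ
      = U * diagonal (w ω) * Uᴴ := by
    intro ω
    have hdiag : diagonal (w ω)
        = (-(Complex.I * ω)) • (1 : Matrix (Fin n) (Fin n) ℂ) + diagonal (fun k => (d k : ℂ)) := by
      rw [Matrix.smul_one_eq_diagonal, Matrix.diagonal_add]
      exact congrArg diagonal (funext fun k => by simp only [hwdef]; ring)
    have hAH : Aᴴ = A := hH
    rw [Matrix.conjTranspose_add, Matrix.conjTranspose_smul, hAH, Matrix.conjTranspose_one]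
    have hstar : star (Complex.I * (ω : ℂ)) = -(Complex.I * ω) := by
      simp [Complex.star_def, Complex.ext_iff]
    rw [hstar, hdiag, Matrix.mul_add, Matrix.add_mul, Matrix.mul_smul, Matrix.smul_mul,
      Matrix.mul_one, hU1, ← hspec]
  have hSinv : ∀ ω : ℝ, ((Complex.I * ω) • (1 : Matrix (Fin n) (Fin n) ℂ) + A)⁻¹
      = U * diagonal (fun k => (v ω k)⁻¹) * Uᴴ := by
    intro ω
    rw [hS ω]
    apply Matrix.inv_eq_left_inv
    calc U * diagonal (fun k => (v ω k)⁻¹) * Uᴴ * (U * diagonal (v ω) * Uᴴ)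
        = U * (diagonal (fun k => (v ω k)⁻¹) * (Uᴴ * U) * diagonal (v ω)) * Uᴴ := by
          simp only [Matrix.mul_assoc]
      _ = 1 := by
          rw [hU2, Matrix.mul_one, Matrix.diagonal_mul_diagonal]
          have : (fun k => (v ω k)⁻¹ * v ω k) = fun _ => (1 : ℂ) := by
            funext k; exact inv_mul_cancel₀ (hvne ω k)
          rw [this, Matrix.diagonal_one, Matrix.mul_one, hU1]
  have hSHinv : ∀ ω : ℝ, (((Complex.I * ω) • (1 : Matrix (Fin n) (Fin n) ℂ) + A)ᴴ)⁻¹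
      = U * diagonal (fun k => (w ω k)⁻¹) * Uᴴ := by
    intro ω
    rw [hSH ω]
    apply Matrix.inv_eq_left_inv
    calc U * diagonal (fun k => (w ω k)⁻¹) * Uᴴ * (U * diagonal (w ω) * Uᴴ)
        = U * (diagonal (fun k => (w ω k)⁻¹) * (Uᴴ * U) * diagonal (w ω)) * Uᴴ := by
          simp only [Matrix.mul_assoc]
      _ = 1 := by
          rw [hU2, Matrix.mul_one, Matrix.diagonal_mul_diagonal]
          have : (fun k => (w ω k)⁻¹ * w ω k) = fun _ => (1 : ℂ) := by
            funext k; exact inv_mul_cancel₀ (hwne ω k)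
          rw [this, Matrix.diagonal_one, Matrix.mul_one, hU1]
  -- the conjugated integrand
  set g : ℝ → Matrix (Fin n) (Fin n) ℂ :=
    fun ω => diagonal (fun k => (v ω k)⁻¹) * F * diagonal (fun k => (w ω k)⁻¹) with hgdef
  have hgentry : ∀ (ω : ℝ) p q, g ω p q = F p q * ((v ω p)⁻¹ * (w ω q)⁻¹) := by
    intro ω p q
    rw [hgdef]
    simp [Matrix.diagonal_mul, Matrix.mul_diagonal]
    ring
  have hgint : @Integrable (Matrix (Fin n) (Fin n) ℂ) frobeniusNormedAddCommGroup.toUniformSpace.toTopologicalSpace _ ℝ _ g volume := by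
    apply integrable_of_entries
    intro p q
    have : (fun ω => g ω p q) = fun ω : ℝ => F p q *
        (((d p : ℂ) + Complex.I * ω)⁻¹ * ((d q : ℂ) - Complex.I * ω)⁻¹) := by
      funext ω; rw [hgentry ω p q]
    rw [this]
    exact ((scalar_key (d p) (d q) (hd p) (hd q)).1).const_mul _
  have hgval : ∀ p q, (∫ ω : ℝ, g ω) p q
      = F p q * ((2 * Real.pi / (d p + d q) : ℝ) : ℂ) := by
    intro p q
    rw [integral_entry hgint p q]
    have : (fun ω => g ω p q) = fun ω : ℝ => F p q *
        (((d p : ℂ) + Complex.I * ω)⁻¹ * ((d q : ℂ) - Complex.I * ω)⁻¹) := by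
      funext ω; rw [hgentry ω p q]
    rw [this, integral_const_mul, (scalar_key (d p) (d q) (hd p) (hd q)).2]
  -- rewrite the integrand
  have hfun : (fun ω : ℝ => ((Complex.I * ω) • (1 : Matrix (Fin n) (Fin n) ℂ) + A)⁻¹ *
      Matrix.single i j (1 : ℂ) *
      ((((Complex.I * ω) • (1 : Matrix (Fin n) (Fin n) ℂ) + A)ᴴ)⁻¹))
      = fun ω => U * g ω * Uᴴ := by
    funext ω
    rw [← hEdef, hSinv ω, hSHinv ω, hgdef, hFdef]
    simp only [Matrix.mul_assoc]
  have hint : @Integrable (Matrix (Fin n) (Fin n) ℂ) frobeniusNormedAddCommGroup.toUniformSpace.toTopologicalSpace _ ℝ _ (fun ω : ℝ => ((Complex.I * ω) • (1 : Matrix (Fin n) (Fin n) ℂ) + A)⁻¹ *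
      Matrix.single i j (1 : ℂ) *
      ((((Complex.I * ω) • (1 : Matrix (Fin n) (Fin n) ℂ) + A)ᴴ)⁻¹)) volume := by
    rw [hfun]
    exact integrable_mul_mul hgint U Uᴴ
  refine ⟨hint, ?_⟩
  rw [hfun, integral_mul_mul hgint U Uᴴ]
  set Y : Matrix (Fin n) (Fin n) ℂ := ∫ ω : ℝ, g ω with hYdef
  set c : ℝ := 1 / (2 * Real.pi) with hcdef
  set D : Matrix (Fin n) (Fin n) ℂ := diagonal (fun k => (d k : ℂ)) with hDdef
  have key : D * Y + Y * D = ((2 * Real.pi : ℝ) : ℂ) • F := by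
    ext p q
    have hpq : ((d p : ℂ) + (d q : ℂ)) ≠ 0 := by
      have : (0:ℝ) < d p + d q := by have := hd p; have := hd q; linarith
      exact_mod_cast this.ne'
    simp only [Matrix.add_apply, Matrix.smul_apply, hDdef, Matrix.diagonal_mul,
      Matrix.mul_diagonal, hgval p q]
    rw [smul_eq_mul]
    push_cast
    field_simp
  have hA_eq : A * (c • (U * Y * Uᴴ)) + (c • (U * Y * Uᴴ)) * A
      = c • (U * (D * Y + Y * D) * Uᴴ) := by
    rw [Matrix.mul_smul, Matrix.smul_mul, ← smul_add]
    congr 1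
    rw [hspec]
    calc U * D * Uᴴ * (U * Y * Uᴴ) + U * Y * Uᴴ * (U * D * Uᴴ)
        = U * (D * (Uᴴ * U) * Y) * Uᴴ + U * (Y * (Uᴴ * U) * D) * Uᴴ := by
          simp only [Matrix.mul_assoc]
      _ = U * (D * Y + Y * D) * Uᴴ := by
          rw [hU2, Matrix.mul_one, Matrix.mul_one, ← Matrix.add_mul, ← Matrix.mul_add]
  rw [hA_eq, key]
  have hsmul : c • (U * (((2 * Real.pi : ℝ) : ℂ) • F) * Uᴴ) = U * F * Uᴴ := by
    have hc1 : c • (((2 * Real.pi : ℝ) : ℂ)) = 1 := by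
      rw [Complex.real_smul, hcdef]
      push_cast
      have : (Real.pi : ℂ) ≠ 0 := by exact_mod_cast Real.pi_ne_zero
      field_simp
    rw [Matrix.mul_smul, Matrix.smul_mul, ← smul_assoc, hc1, one_smul]
  rw [hsmul, hFdef]
  calc U * (Uᴴ * E * U) * Uᴴ = (U * Uᴴ) * E * (U * Uᴴ) := by simp only [Matrix.mul_assoc]
    _ = E := by rw [hU1, Matrix.one_mul, Matrix.mul_one]
end

section
/- Let A be an n×n real matrix, let V be an n×m real matrix with orthonormal columns (V^T V = I_m), let v be a unit vector in ℝⁿ orthogonal to the columns of V (V^T v = 0), let τ ∈ ℝ, and set T = V^T A V. Assume the Arnoldi relation A V = V T + τ v e_m^T. Let β₀ ≥ 0, let Y be an m×m real symmetric matrix satisfying T Y + Y T^T = β₀² e₁ e₁^T, and set X_m = V Y V^T and R = A X_m + X_m A^T − β₀² (V e₁)(V e₁)^T. Then ‖R‖₂ = |τ| · ‖Y e_m‖₂ and ‖R‖_F = √2 · |τ| · ‖Y e_m‖₂. -/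
open Matrix

/-- The spectral norm (operator norm induced by the Euclidean vector norm) of a real
square matrix. -/
noncomputable def spectralNorm' {k : ℕ} (R : Matrix (Fin k) (Fin k) ℝ) : ℝ :=
  ‖Matrix.toEuclideanCLM (𝕜 := ℝ) R‖

/-- The Frobenius norm of a real matrix. -/
noncomputable def frobeniusNorm' {k l : ℕ} (R : Matrix (Fin k) (Fin l) ℝ) : ℝ :=
  Real.sqrt (∑ i, ∑ j, (R i j) ^ 2)

/-- The Euclidean norm of a real vector. -/
noncomputable def euclNorm' {k : ℕ} (x : Fin k → ℝ) : ℝ :=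
  Real.sqrt (∑ i, (x i) ^ 2)

lemma vecMulVec_mul' {n p q : ℕ} (a : Fin n → ℝ) (b : Fin p → ℝ)
    (M : Matrix (Fin p) (Fin q) ℝ) :
    vecMulVec a b * M = vecMulVec a (Mᵀ *ᵥ b) := by
  ext i j
  simp only [mul_apply, vecMulVec_apply, mulVec, dotProduct, transpose_apply,
    Finset.mul_sum]
  exact Finset.sum_congr rfl fun k _ => by ring

lemma mul_vecMulVec' {n p q : ℕ} (M : Matrix (Fin q) (Fin p) ℝ) (a : Fin p → ℝ)
    (b : Fin n → ℝ) :
    M * vecMulVec a b = vecMulVec (M *ᵥ a) b := by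
  ext i j
  simp only [mul_apply, vecMulVec_apply, mulVec, dotProduct, Finset.sum_mul]
  exact Finset.sum_congr rfl fun k _ => by ring

lemma vecMulVec_transpose' {n p : ℕ} (a : Fin n → ℝ) (b : Fin p → ℝ) :
    (vecMulVec a b)ᵀ = vecMulVec b a := by
  ext i j; simp [vecMulVec_apply, mul_comm]

lemma residual_eq
    (n m : ℕ)
    (A : Matrix (Fin n) (Fin n) ℝ)
    (V : Matrix (Fin n) (Fin (m + 1)) ℝ)
    (v : Fin n → ℝ) (τ : ℝ)
    (T : Matrix (Fin (m + 1)) (Fin (m + 1)) ℝ)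
    (hArnoldi : A * V = V * T + τ • Matrix.vecMulVec v (Pi.single (Fin.last m) 1))
    (β₀ : ℝ)
    (Y : Matrix (Fin (m + 1)) (Fin (m + 1)) ℝ)
    (hYsymm : Yᵀ = Y)
    (hY : T * Y + Y * Tᵀ = (β₀ ^ 2) • Matrix.single 0 0 (1 : ℝ)) :
    A * (V * Y * Vᵀ) + (V * Y * Vᵀ) * Aᵀ -
        (β₀ ^ 2) • Matrix.vecMulVec (V *ᵥ Pi.single 0 1) (V *ᵥ Pi.single 0 1)
      = τ • (vecMulVec v (V *ᵥ fun i => Y i (Fin.last m))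
          + vecMulVec (V *ᵥ fun i => Y i (Fin.last m)) v) := by
  have hu : (fun i => Y i (Fin.last m)) = Y *ᵥ Pi.single (Fin.last m) 1 := by
    ext i; simp
  have h1 : A * (V * Y * Vᵀ)
      = V * (T * Y) * Vᵀ + τ • vecMulVec v (V *ᵥ fun i => Y i (Fin.last m)) := by
    calc A * (V * Y * Vᵀ) = (A * V) * (Y * Vᵀ) := by
          rw [Matrix.mul_assoc, Matrix.mul_assoc]
      _ = (V * T) * (Y * Vᵀ)
          + τ • (vecMulVec v (Pi.single (Fin.last m) 1) * (Y * Vᵀ)) := by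
          rw [hArnoldi, Matrix.add_mul, Matrix.smul_mul]
      _ = _ := by
          rw [vecMulVec_mul', Matrix.transpose_mul, Matrix.transpose_transpose, hYsymm,
            ← Matrix.mulVec_mulVec, ← hu]
          rw [Matrix.mul_assoc V T (Y * Vᵀ), ← Matrix.mul_assoc T Y Vᵀ,
            ← Matrix.mul_assoc V (T * Y) Vᵀ]
  have h2 : (V * Y * Vᵀ) * Aᵀ
      = V * (Y * Tᵀ) * Vᵀ + τ • vecMulVec (V *ᵥ fun i => Y i (Fin.last m)) v := by
    calc (V * Y * Vᵀ) * Aᵀ = (V * Y) * (A * V)ᵀ := by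
          rw [Matrix.mul_assoc, ← Matrix.transpose_mul]
      _ = (V * Y) * (Tᵀ * Vᵀ)
          + τ • ((V * Y) * vecMulVec (Pi.single (Fin.last m) 1) v) := by
          rw [hArnoldi, Matrix.transpose_add, Matrix.transpose_smul, Matrix.transpose_mul,
            Matrix.mul_add, Matrix.mul_smul, vecMulVec_transpose']
      _ = _ := by
          rw [mul_vecMulVec', ← Matrix.mulVec_mulVec, ← hu]
          rw [← Matrix.mul_assoc (V * Y) Tᵀ Vᵀ, Matrix.mul_assoc V Y Tᵀ]
  have h3 : V * (T * Y) * Vᵀ + V * (Y * Tᵀ) * Vᵀ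
      = (β₀ ^ 2) • Matrix.vecMulVec (V *ᵥ Pi.single 0 1) (V *ᵥ Pi.single 0 1) := by
    have : V * (T * Y) * Vᵀ + V * (Y * Tᵀ) * Vᵀ = V * (T * Y + Y * Tᵀ) * Vᵀ := by
      rw [Matrix.mul_add, Matrix.add_mul]
    rw [this, hY, Matrix.mul_smul, Matrix.smul_mul]
    congr 1
    ext i j
    simp [mul_apply, vecMulVec_apply, mulVec, dotProduct, Matrix.single,
      Pi.single_apply, Finset.mul_sum, Finset.sum_mul, ite_and, eq_comm]
  rw [h1, h2, ← h3, smul_add]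
  abel

lemma sum_sq_expand2 {n : ℕ} (a b : ℝ) (x y : Fin n → ℝ) :
    ∑ i, (a * x i + b * y i) ^ 2
      = a ^ 2 * (∑ i, x i * x i) + b ^ 2 * (∑ i, y i * y i)
        + 2 * a * b * (∑ i, x i * y i) := by
  have h : ∀ i ∈ Finset.univ, (a * x i + b * y i) ^ 2
      = a ^ 2 * (x i * x i) + b ^ 2 * (y i * y i) + 2 * a * b * (x i * y i) :=
    fun i _ => by ring
  rw [Finset.sum_congr rfl h]
  simp only [Finset.sum_add_distrib, Finset.mul_sum]

lemma sum_sq_expand3 {n : ℕ} (a b c : ℝ) (x y z : Fin n → ℝ) :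
    ∑ i, (a * x i + b * y i + c * z i) ^ 2
      = a ^ 2 * (∑ i, x i * x i) + b ^ 2 * (∑ i, y i * y i) + c ^ 2 * (∑ i, z i * z i)
        + 2 * a * b * (∑ i, x i * y i) + 2 * a * c * (∑ i, x i * z i)
        + 2 * b * c * (∑ i, y i * z i) := by
  have h : ∀ i ∈ Finset.univ, (a * x i + b * y i + c * z i) ^ 2
      = a ^ 2 * (x i * x i) + b ^ 2 * (y i * y i) + c ^ 2 * (z i * z i)
        + 2 * a * b * (x i * y i) + 2 * a * c * (x i * z i) + 2 * b * c * (y i * z i) :=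
    fun i _ => by ring
  rw [Finset.sum_congr rfl h]
  simp only [Finset.sum_add_distrib, Finset.mul_sum]

lemma double_sum_frob {n : ℕ} (τ : ℝ) (v w : Fin n → ℝ) :
    ∑ i, ∑ j, (τ * (v i * w j + w i * v j)) ^ 2
      = 2 * τ ^ 2 * ((∑ i, v i * v i) * (∑ i, w i * w i))
        + 2 * τ ^ 2 * (∑ i, v i * w i) ^ 2 := by
  have h : ∀ i ∈ (Finset.univ : Finset (Fin n)),
      ∑ j, (τ * (v i * w j + w i * v j)) ^ 2
        = (τ ^ 2 * (v i * v i)) * (∑ j, w j * w j)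
          + ((2 * τ ^ 2 * (v i * w i)) * (∑ j, v j * w j)
          + (τ ^ 2 * (w i * w i)) * (∑ j, v j * v j)) := by
    intro i _
    have h2 : ∀ j ∈ (Finset.univ : Finset (Fin n)),
        (τ * (v i * w j + w i * v j)) ^ 2
          = (τ ^ 2 * (v i * v i)) * (w j * w j)
            + ((2 * τ ^ 2 * (v i * w i)) * (v j * w j)
            + (τ ^ 2 * (w i * w i)) * (v j * v j)) := fun j _ => by ring
    rw [Finset.sum_congr rfl h2]
    simp only [Finset.sum_add_distrib, ← Finset.mul_sum]
  rw [Finset.sum_congr rfl h]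
  simp only [Finset.sum_add_distrib, ← Finset.sum_mul, ← Finset.mul_sum]
  ring

set_option maxHeartbeats 1000000 in
set_option synthInstance.maxHeartbeats 400000 in
/-- **Residual norm of the Galerkin approximation.**
With the Arnoldi relation `A V = V T + τ v e_mᵀ` (`V` with orthonormal columns, `v` a unit
vector orthogonal to the columns of `V`, `T = Vᵀ A V`), if the symmetric matrix `Y` solves
the reduced equation `T Y + Y Tᵀ = β₀² e₁ e₁ᵀ`, then the residual
`R = A X_m + X_m Aᵀ - β₀² (V e₁)(V e₁)ᵀ` of `X_m = V Y Vᵀ` satisfies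
`‖R‖₂ = |τ| ‖Y e_m‖₂` and `‖R‖_F = √2 |τ| ‖Y e_m‖₂`. -/
theorem galerkin_residual_norm
    (n m : ℕ)
    (A : Matrix (Fin n) (Fin n) ℝ)
    (V : Matrix (Fin n) (Fin (m + 1)) ℝ)
    (v : Fin n → ℝ) (τ : ℝ)
    (T : Matrix (Fin (m + 1)) (Fin (m + 1)) ℝ)
    (hT : T = Vᵀ * A * V)
    (hVorth : Vᵀ * V = 1)
    (hvunit : v ⬝ᵥ v = 1)
    (hvV : Vᵀ *ᵥ v = 0)
    (hArnoldi : A * V = V * T + τ • Matrix.vecMulVec v (Pi.single (Fin.last m) 1))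
    (β₀ : ℝ) (hβ₀ : 0 ≤ β₀)
    (Y : Matrix (Fin (m + 1)) (Fin (m + 1)) ℝ)
    (hYsymm : Yᵀ = Y)
    (hY : T * Y + Y * Tᵀ = (β₀ ^ 2) • Matrix.single 0 0 (1 : ℝ)) :
    spectralNorm'
        (A * (V * Y * Vᵀ) + (V * Y * Vᵀ) * Aᵀ -
          (β₀ ^ 2) • Matrix.vecMulVec (V *ᵥ Pi.single 0 1) (V *ᵥ Pi.single 0 1)) =
      |τ| * euclNorm' (fun i => Y i (Fin.last m)) ∧
    frobeniusNorm'
        (A * (V * Y * Vᵀ) + (V * Y * Vᵀ) * Aᵀ -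
          (β₀ ^ 2) • Matrix.vecMulVec (V *ᵥ Pi.single 0 1) (V *ᵥ Pi.single 0 1)) =
      Real.sqrt 2 * |τ| * euclNorm' (fun i => Y i (Fin.last m)) := by
  have hR := residual_eq n m A V v τ T hArnoldi β₀ Y hYsymm hY
  rw [hR]
  set w : Fin n → ℝ := V *ᵥ (fun i => Y i (Fin.last m)) with hwdef
  -- basic scalar identities
  have hvv : ∑ i, v i * v i = 1 := by simpa [dotProduct] using hvunit
  have hvw : ∑ i, v i * w i = 0 := by
    have h : v ⬝ᵥ w = 0 := by
      rw [hwdef, Matrix.dotProduct_mulVec, ← Matrix.mulVec_transpose, hvV,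
        zero_dotProduct]
    simpa [dotProduct] using h
  set B : ℝ := ∑ i, Y i (Fin.last m) * Y i (Fin.last m) with hBdef
  have hww : ∑ i, w i * w i = B := by
    have h : w ⬝ᵥ w = (fun i => Y i (Fin.last m)) ⬝ᵥ (fun i => Y i (Fin.last m)) := by
      rw [hwdef, Matrix.dotProduct_mulVec, ← Matrix.mulVec_transpose,
        Matrix.mulVec_mulVec, hVorth, Matrix.one_mulVec]
    simpa [dotProduct, hBdef] using h
  have hB0 : 0 ≤ B := Finset.sum_nonneg fun i _ => mul_self_nonneg _
  have hEu : euclNorm' (fun i => Y i (Fin.last m)) = Real.sqrt B := by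
    rw [euclNorm', hBdef]
    congr 1
    exact Finset.sum_congr rfl fun i _ => pow_two _
  -- pointwise formula for `S *ᵥ y`
  have hS : ∀ (y : Fin n → ℝ) (i : Fin n),
      ((τ • (vecMulVec v w + vecMulVec w v)) *ᵥ y) i
        = τ * ((∑ j, y j * w j) * v i + (∑ j, y j * v j) * w i) := by
    intro y i
    calc ((τ • (vecMulVec v w + vecMulVec w v)) *ᵥ y) i
        = ∑ j, (τ * (v i * w j + w i * v j)) * y j := by
          simp only [Matrix.mulVec, dotProduct, Matrix.smul_apply, Matrix.add_apply,
            vecMulVec_apply, smul_eq_mul]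
      _ = _ := by
          have h : ∀ j ∈ (Finset.univ : Finset (Fin n)),
              (τ * (v i * w j + w i * v j)) * y j
                = (τ * v i) * (y j * w j) + (τ * w i) * (y j * v j) := fun j _ => by ring
          rw [Finset.sum_congr rfl h]
          simp only [Finset.sum_add_distrib, ← Finset.mul_sum]
          ring
  set f := Matrix.toEuclideanCLM (𝕜 := ℝ) (τ • (vecMulVec v w + vecMulVec w v)) with hfdef
  have happ : ∀ (x : EuclideanSpace ℝ (Fin n)) (i : Fin n),
      f x i = τ * ((∑ j, x j * w j) * v i + (∑ j, x j * v j) * w i) := by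
    intro x i
    have h := congrFun (Matrix.ofLp_toEuclideanCLM (𝕜 := ℝ)
      (τ • (vecMulVec v w + vecMulVec w v)) x) i
    rw [hS] at h
    exact h
  have hnorm : ∀ (x : EuclideanSpace ℝ (Fin n)),
      ‖x‖ = Real.sqrt (∑ i, (x i) ^ 2) := by
    intro x
    rw [EuclideanSpace.norm_eq]
    congr 1
    exact Finset.sum_congr rfl fun i _ => by rw [Real.norm_eq_abs, sq_abs]
  rw [hEu]
  constructor
  · -- spectral norm
    show ‖f‖ = |τ| * Real.sqrt B
    rcases eq_or_lt_of_le hB0 with hB | hB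
    · -- B = 0 : the residual vanishes
      have hw0 : w = 0 := by
        have h0 : ∑ i, w i * w i = 0 := by rw [hww, ← hB]
        funext i
        have hi := (Finset.sum_eq_zero_iff_of_nonneg
          (fun i _ => mul_self_nonneg (w i))).mp h0 i (Finset.mem_univ i)
        simpa using mul_self_eq_zero.mp hi
      have hSzero : τ • (vecMulVec v w + vecMulVec w v) = 0 := by
        rw [hw0]
        ext i j
        simp [vecMulVec_apply]
      rw [hfdef, hSzero, ← hB]
      simp
    · apply le_antisymm
      · apply ContinuousLinearMap.opNorm_le_bound f
          (mul_nonneg (abs_nonneg τ) (Real.sqrt_nonneg B))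
        intro x
        set p : ℝ := ∑ j, x j * v j with hpdef
        set q : ℝ := ∑ j, x j * w j with hqdef
        set X : ℝ := ∑ i, x i * x i with hXdef
        have hXnn : 0 ≤ X := Finset.sum_nonneg fun i _ => mul_self_nonneg _
        have hsum : ∑ i, (f x i) ^ 2 = τ ^ 2 * (q * q) + (τ ^ 2 * B) * (p * p) := by
          calc ∑ i, (f x i) ^ 2
              = ∑ i, ((τ * q) * v i + (τ * p) * w i) ^ 2 :=
                Finset.sum_congr rfl fun i _ => by rw [happ x i]; ring
            _ = (τ * q) ^ 2 * (∑ i, v i * v i) + (τ * p) ^ 2 * (∑ i, w i * w i)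
                + 2 * (τ * q) * (τ * p) * (∑ i, v i * w i) := sum_sq_expand2 _ _ _ _
            _ = _ := by rw [hvv, hww, hvw]; ring
        have hexp := sum_sq_expand3 B (-(B * p)) (-q) (fun i => x i) v w
        have h0 : (0:ℝ) ≤ ∑ i, (B * x i + -(B * p) * v i + -q * w i) ^ 2 :=
          Finset.sum_nonneg fun i _ => sq_nonneg _
        rw [hexp, ← hXdef, hvv, hww, hvw, ← hpdef, ← hqdef] at h0
        have key : q * q + B * (p * p) ≤ B * X := by nlinarith [h0, hB]
        have hfx : ‖f x‖ = Real.sqrt (τ ^ 2 * (q * q) + (τ ^ 2 * B) * (p * p)) := by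
          rw [hnorm (f x), hsum]
        have hxn : ‖x‖ = Real.sqrt X := by
          rw [hnorm x, hXdef]
          congr 1
          exact Finset.sum_congr rfl fun i _ => pow_two _
        have hrhs : |τ| * Real.sqrt B * Real.sqrt X = Real.sqrt (τ ^ 2 * (B * X)) := by
          rw [Real.sqrt_mul (sq_nonneg τ), Real.sqrt_mul hB0, Real.sqrt_sq_eq_abs,
            mul_assoc]
        rw [hfx, hxn, hrhs]
        exact Real.sqrt_le_sqrt (by nlinarith [key, sq_nonneg τ])
      · -- lower bound using the unit vector v
        have hvnorm : ‖(WithLp.equiv 2 (Fin n → ℝ)).symm v‖ = 1 := by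
          rw [hnorm]
          have h1 : ∑ i, (((WithLp.equiv 2 (Fin n → ℝ)).symm v) i) ^ 2
              = ∑ i, v i * v i := Finset.sum_congr rfl fun i _ => pow_two _
          rw [h1, hvv, Real.sqrt_one]
        have hfv : ‖f ((WithLp.equiv 2 (Fin n → ℝ)).symm v)‖ = |τ| * Real.sqrt B := by
          rw [hnorm]
          have h1 : ∀ i : Fin n, f ((WithLp.equiv 2 (Fin n → ℝ)).symm v) i = τ * w i := by
            intro i
            rw [happ]
            have e1 : ∑ j, ((WithLp.equiv 2 (Fin n → ℝ)).symm v) j * w j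
                = ∑ j, v j * w j := Finset.sum_congr rfl fun j _ => rfl
            have e2 : ∑ j, ((WithLp.equiv 2 (Fin n → ℝ)).symm v) j * v j
                = ∑ j, v j * v j := Finset.sum_congr rfl fun j _ => rfl
            rw [e1, e2, hvw, hvv]
            ring
          have h2 : ∑ i, (f ((WithLp.equiv 2 (Fin n → ℝ)).symm v) i) ^ 2 = τ ^ 2 * B := by
            calc ∑ i, (f ((WithLp.equiv 2 (Fin n → ℝ)).symm v) i) ^ 2
                = ∑ i, τ ^ 2 * (w i * w i) :=
                  Finset.sum_congr rfl fun i _ => by rw [h1 i]; ring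
              _ = τ ^ 2 * B := by rw [← Finset.mul_sum, hww]
          rw [h2, Real.sqrt_mul (sq_nonneg τ), Real.sqrt_sq_eq_abs]
        calc |τ| * Real.sqrt B = ‖f ((WithLp.equiv 2 (Fin n → ℝ)).symm v)‖ := hfv.symm
          _ ≤ ‖f‖ * ‖(WithLp.equiv 2 (Fin n → ℝ)).symm v‖ := f.le_opNorm _
          _ = ‖f‖ := by rw [hvnorm, mul_one]
  · -- Frobenius norm
    rw [frobeniusNorm']
    have h1 : ∑ i, ∑ j, ((τ • (vecMulVec v w + vecMulVec w v)) i j) ^ 2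
        = ∑ i, ∑ j, (τ * (v i * w j + w i * v j)) ^ 2 := by
      refine Finset.sum_congr rfl fun i _ => Finset.sum_congr rfl fun j _ => ?_
      simp [vecMulVec_apply]
    rw [h1, double_sum_frob, hvv, hvw, hww]
    rw [show 2 * τ ^ 2 * (1 * B) + 2 * τ ^ 2 * (0:ℝ) ^ 2 = 2 * (τ ^ 2 * B) by ring]
    rw [Real.sqrt_mul (by norm_num : (0:ℝ) ≤ 2), Real.sqrt_mul (sq_nonneg τ),
      Real.sqrt_sq_eq_abs]
    ring
end
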